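/- arXiv:2405.07763 — 9 statements merged into one kernel-verified Lean document; each statement's English description precedes it below -/
import Mathlib

section
/- For every r-uniform hypergraph F, every 2 ≤ s ≤ r−1, and every n, the maximum number of copies of the complete s-uniform hypergraph on r vertices K_r^(s) in an n-vertex s-uniform hypergraph containing no copy of ∂^(s)F is at most the maximum number of copies of K_r^(s+1) in an n-vertex (s+1)-uniform hypergraph containing no copy of ∂^(s+1)F. -/
/-- `G` contains a copy of `F`: an injection of vertices mapping edges to edges. -/
def ContainsCopy {α β : Type*} (G : Finset (Finset α)) (F : Finset (Finset β)) : Prop :=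
  ∃ φ : β ↪ α, ∀ e ∈ F, e.map φ ∈ G

/-- The `s`-uniform shadow of a hypergraph `F`: all `s`-subsets of edges of `F`. -/
def shadowU {β : Type*} [DecidableEq β] (F : Finset (Finset β)) (s : ℕ) :
    Finset (Finset β) :=
  F.biUnion fun B => B.powersetCard s

/-- The number of copies of `K_r^(s)` in an `s`-uniform hypergraph `G` on `Fin n`:
`r`-sets all of whose `s`-subsets are edges. -/
def KCount {n : ℕ} (G : Finset (Finset (Fin n))) (r s : ℕ) : ℕ :=
  ((Finset.univ.powersetCard r).filter fun S => ∀ f ∈ S.powersetCard s, f ∈ G).card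

/-- `ex(n, K_r^(s), ∂^(s)F)`: the maximum number of copies of `K_r^(s)` in an
`s`-uniform hypergraph on `n` vertices containing no copy of the `s`-uniform shadow of `F`. -/
noncomputable def exK (n r s : ℕ) {β : Type*} [DecidableEq β] (F : Finset (Finset β)) : ℕ :=
  sSup {m | ∃ G : Finset (Finset (Fin n)), (∀ e ∈ G, e.card = s) ∧
    ¬ ContainsCopy G (shadowU F s) ∧ KCount G r s = m}

theorem stmt2 {r s n : ℕ} {β : Type*} [DecidableEq β]
    (hs : 2 ≤ s) (hsr : s ≤ r - 1) (hr : 3 ≤ r)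
    (F : Finset (Finset β)) (hF : ∀ e ∈ F, e.card = r) :
    exK n r s F ≤ exK n r (s + 1) F := by
  have hs1r : s + 1 ≤ r := by omega
  have hbddB : BddAbove {m | ∃ G : Finset (Finset (Fin n)), (∀ e ∈ G, e.card = s + 1) ∧
      ¬ ContainsCopy G (shadowU F (s + 1)) ∧ KCount G r (s + 1) = m} := by
    refine ⟨(Finset.univ.powersetCard r : Finset (Finset (Fin n))).card, ?_⟩
    rintro m ⟨G, -, -, rfl⟩
    exact Finset.card_filter_le _ _
  rcases Set.eq_empty_or_nonempty {m | ∃ G : Finset (Finset (Fin n)), (∀ e ∈ G, e.card = s) ∧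
      ¬ ContainsCopy G (shadowU F s) ∧ KCount G r s = m} with hA | hA
  · rw [exK, hA, csSup_empty]; exact Nat.zero_le _
  · rw [exK]
    apply csSup_le hA
    rintro m ⟨G, hGu, hGc, rfl⟩
    set G' := (Finset.univ.powersetCard (s + 1)).filter
      (fun e : Finset (Fin n) => ∀ f ∈ e.powersetCard s, f ∈ G) with hG'
    have h1 : ∀ e ∈ G', e.card = s + 1 := fun e he =>
      (Finset.mem_powersetCard.1 (Finset.mem_filter.1 he).1).2
    have h2 : ¬ ContainsCopy G' (shadowU F (s + 1)) := by
      rintro ⟨φ, hφ⟩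
      apply hGc
      refine ⟨φ, fun f hf => ?_⟩
      simp only [shadowU, Finset.mem_biUnion] at hf
      obtain ⟨e, he, hfe⟩ := hf
      rw [Finset.mem_powersetCard] at hfe
      obtain ⟨hfe1, hfe2⟩ := hfe
      obtain ⟨f', hff', hf'e, hf'c⟩ := Finset.exists_subsuperset_card_eq (n := s + 1) hfe1
        (by omega) (by rw [hF e he]; omega)
      have hf'G' : f'.map φ ∈ G' := by
        apply hφ
        simp only [shadowU, Finset.mem_biUnion]
        exact ⟨e, he, Finset.mem_powersetCard.2 ⟨hf'e, hf'c⟩⟩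
      have := (Finset.mem_filter.1 hf'G').2
      exact this (f.map φ) (Finset.mem_powersetCard.2
        ⟨Finset.map_subset_map.2 hff', by rw [Finset.card_map, hfe2]⟩)
    have h3 : KCount G r s ≤ KCount G' r (s + 1) := by
      apply Finset.card_le_card
      intro S hS
      rw [Finset.mem_filter] at hS ⊢
      obtain ⟨hS1, hS2⟩ := hS
      refine ⟨hS1, fun g hg => ?_⟩
      rw [Finset.mem_powersetCard] at hg
      rw [hG', Finset.mem_filter]
      refine ⟨Finset.mem_powersetCard.2 ⟨Finset.subset_univ g, hg.2⟩, fun f hf => ?_⟩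
      rw [Finset.mem_powersetCard] at hf
      exact hS2 f (Finset.mem_powersetCard.2 ⟨hf.1.trans hg.1, hf.2⟩)
    exact h3.trans (le_csSup hbddB ⟨G', h1, h2, rfl⟩)
end

section
/- Let r ≥ 3 and 1 ≤ a₁ ≤ a₂ ≤ ⋯ ≤ a_r be integers, and let G be an (r−1)-uniform hypergraph that contains no copy of the complete r-partite (r−1)-uniform hypergraph K_r^(r−1)(a₁,…,a_r). Then for every set of a_{r−1} distinct vertices v₁,…,v_{a_{r−1}} of G, the (r−1)-uniform hypergraph G(v₁) ∩ ⋯ ∩ G(v_{a_{r−1}}) contains no copy of K_{r−1}^(r−1)(a₁,…,a_{r−2},a_r). -/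
/-- `G` contains a copy of the complete `ℓ`-partite `t`-uniform hypergraph with
part sizes `c 0, …, c (ℓ-1)`: there are disjoint parts `V i` of sizes `c i` such that
every `t`-set meeting `t` distinct parts in one vertex each is an edge of `G`. -/
def ContainsCMP {α : Type*} [DecidableEq α] (G : Finset (Finset α)) (t ℓ : ℕ)
    (c : Fin ℓ → ℕ) : Prop :=
  ∃ V : Fin ℓ → Finset α,
    (∀ i j, i ≠ j → Disjoint (V i) (V j)) ∧ (∀ i, (V i).card = c i) ∧
    ∀ S : Finset (Fin ℓ), S.card = t →
      ∀ g : Fin ℓ → α, (∀ i ∈ S, g i ∈ V i) → S.image g ∈ G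

/-- `S` spans a clique `K_r^(r-1)` in the `(r-1)`-uniform hypergraph `G`. -/
def SpansClique {α : Type*} [DecidableEq α] (G : Finset (Finset α)) (r : ℕ)
    (S : Finset α) : Prop :=
  S.card = r ∧ ∀ f ∈ S.powersetCard (r - 1), f ∈ G

instance {α : Type*} [DecidableEq α] (G : Finset (Finset α)) (r : ℕ) :
    DecidablePred (SpansClique G r) := fun S =>
  decidable_of_iff (S.card = r ∧ ∀ f ∈ S.powersetCard (r - 1), f ∈ G) Iff.rfl

/-- The intersection hypergraph `G(v₁) ∩ ⋯ ∩ G(v_a)` for `vs = {v₁,…,v_a}`: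
its edges are the `(r-1)`-sets `e` disjoint from `vs` such that `e ∪ {v}` spans a
clique `K_r^(r-1)` in `G` for every `v ∈ vs`. -/
def interGraph {α : Type*} [DecidableEq α] [Fintype α] (G : Finset (Finset α)) (r : ℕ)
    (vs : Finset α) : Finset (Finset α) :=
  (Finset.univ.powersetCard (r - 1)).filter fun e =>
    Disjoint e vs ∧ ∀ v ∈ vs, SpansClique G r (insert v e)

theorem stmt4 {α : Type*} [DecidableEq α] [Fintype α] {r : ℕ} (hr : 3 ≤ r)
    (a : ℕ → ℕ) (ha1 : ∀ i, 1 ≤ i → i ≤ r → 1 ≤ a i)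
    (hmono : ∀ i, 1 ≤ i → i < r → a i ≤ a (i + 1))
    (G : Finset (Finset α)) (hG : ∀ e ∈ G, e.card = r - 1)
    (hfree : ¬ ContainsCMP G (r - 1) r (fun i => a (i.val + 1)))
    (vs : Finset α) (hvs : vs.card = a (r - 1)) :
    ¬ ContainsCMP (interGraph G r vs) (r - 1) (r - 1)
        (fun i => if (i : ℕ) = r - 2 then a r else a (i.val + 1)) := by
  classical
  obtain ⟨n, rfl⟩ : ∃ n, r = n + 2 := ⟨r - 2, by omega⟩
  rintro ⟨V, hVdisj, hVcard, hVedge⟩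
  simp only [show n + 2 - 1 = n + 1 from rfl, show n + 2 - 2 = n from rfl] at *
  have hVne : ∀ i, (V i).Nonempty := by
    intro i
    rw [← Finset.card_pos, hVcard i]
    split
    · exact ha1 (n + 2) (by omega) le_rfl
    · exact ha1 (i.val + 1) (by omega) (by omega)
  have hedge : ∀ g : Fin (n + 1) → α, (∀ i, g i ∈ V i) →
      Finset.univ.image g ∈ interGraph G (n + 2) vs := by
    intro g hg
    have := hVedge Finset.univ (by simp) g (fun i _ => hg i)
    simpa using this
  have hmem : ∀ e ∈ interGraph G (n + 2) vs, e.card = n + 1 ∧ Disjoint e vs ∧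
      ∀ v ∈ vs, SpansClique G (n + 2) (insert v e) := by
    intro e he
    simp only [interGraph, Finset.mem_filter, Finset.mem_powersetCard] at he
    exact ⟨he.1.2, he.2.1, he.2.2⟩
  have hVvs : ∀ i, Disjoint (V i) vs := by
    intro i
    rw [Finset.disjoint_left]
    intro x hx hxvs
    set g : Fin (n + 1) → α := fun j => if j = i then x else (hVne j).choose with hgdef
    have hg : ∀ j, g j ∈ V j := by
      intro j
      by_cases h : j = i
      · subst h; simpa [g] using hx
      · simpa [g, h] using (hVne j).choose_spec
    have hdis := (hmem _ (hedge g hg)).2.1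
    have hxin : x ∈ Finset.univ.image g :=
      Finset.mem_image.2 ⟨i, Finset.mem_univ i, by simp [g]⟩
    exact (Finset.disjoint_left.1 hdis) hxin hxvs
  have hvsne : vs.Nonempty := by
    rw [← Finset.card_pos, hvs]
    exact ha1 (n + 1) (by omega) (by omega)
  -- index maps
  let φ : Fin (n + 1) → Fin (n + 2) := fun j =>
    if h : j.val < n then ⟨j.val, by omega⟩ else ⟨n + 1, by omega⟩
  let ψ : Fin (n + 2) → Fin (n + 1) := fun i =>
    if h : i.val < n then ⟨i.val, by omega⟩ else ⟨n, by omega⟩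
  have hφval : ∀ j : Fin (n + 1), (φ j).val = if j.val < n then j.val else n + 1 := by
    intro j; simp only [φ]; split <;> simp
  have hψval : ∀ i : Fin (n + 2), (ψ i).val = if i.val < n then i.val else n := by
    intro i; simp only [ψ]; split <;> simp
  have hφne : ∀ j, (φ j).val ≠ n := by
    intro j; rw [hφval]; split <;> omega
  have hψφ : ∀ j, ψ (φ j) = j := by
    intro j
    apply Fin.ext
    rw [hψval, hφval]
    split_ifs <;> omega
  have hφψ : ∀ i : Fin (n + 2), i.val ≠ n → φ (ψ i) = i := by
    intro i hi
    apply Fin.ext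
    rw [hφval, hψval]
    split_ifs <;> omega
  let W : Fin (n + 2) → Finset α := fun i => if i.val = n then vs else V (ψ i)
  have hWdisj : ∀ i j, i ≠ j → Disjoint (W i) (W j) := by
    intro i j hij
    simp only [W]
    split_ifs with h1 h2 h3
    · exact absurd (Fin.ext (h1.trans h2.symm)) hij
    · exact (hVvs (ψ j)).symm
    · exact hVvs (ψ i)
    · apply hVdisj
      intro h
      exact hij (by rw [← hφψ i h1, h, hφψ j h3])
  apply hfree
  refine ⟨W, hWdisj, ?_, ?_⟩
  · intro i
    simp only [W]
    split_ifs with h1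
    · rw [hvs]; simp [h1]
    · rw [hVcard]
      have : (ψ i).val = i.val ∨ ((ψ i).val = n ∧ i.val = n + 1) := by
        rw [hψval]; split_ifs <;> omega
      rcases this with h | ⟨h, h'⟩
      · rw [if_neg (by omega)]
        simp [h]
      · rw [if_pos h]
        simp [h']
  · intro S hS g hg
    have hScompl : Sᶜ.card = 1 := by
      have h1 := Finset.card_compl S
      simp only [hS, Fintype.card_fin] at h1
      omega
    obtain ⟨k, hk⟩ := Finset.card_eq_one.1 hScompl
    have hkS : k ∉ S := by
      have : k ∈ Sᶜ := hk ▸ Finset.mem_singleton_self k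
      exact Finset.mem_compl.1 this
    have hmemS : ∀ i, i ≠ k → i ∈ S := by
      intro i hik
      by_contra h
      have : i ∈ Sᶜ := Finset.mem_compl.2 h
      rw [hk, Finset.mem_singleton] at this
      exact hik this
    have hinjS : Set.InjOn g S := by
      intro i hi j hj hgij
      by_contra hij
      have hd := hWdisj i j hij
      exact (Finset.disjoint_left.1 hd) (hg i hi) (hgij ▸ hg j hj)
    have hcardimg : (S.image g).card = n + 1 := by
      rw [Finset.card_image_of_injOn hinjS, hS]
    by_cases hkn : k.val = n
    · -- vs part excluded
      set g' : Fin (n + 1) → α := fun j => g (φ j) with hg'def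
      have hφS : ∀ j, φ j ∈ S := by
        intro j
        refine hmemS _ (fun h => hφne j ?_)
        rw [h]; exact hkn
      have hg'mem : ∀ j, g' j ∈ V j := by
        intro j
        have := hg (φ j) (hφS j)
        simp only [W, if_neg (hφne j), hψφ j] at this
        exact this
      obtain ⟨hcard, hdis, hclique⟩ := hmem _ (hedge g' hg'mem)
      have heG : Finset.univ.image g' ∈ G := by
        obtain ⟨v, hv⟩ := hvsne
        apply (hclique v hv).2
        rw [Finset.mem_powersetCard]
        exact ⟨Finset.subset_insert _ _, hcard⟩
      have himg : S.image g = Finset.univ.image g' := by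
        ext x
        simp only [Finset.mem_image, Finset.mem_univ, true_and]
        constructor
        · rintro ⟨i, hiS, rfl⟩
          have hin : i.val ≠ n := by
            intro h
            exact hkS (Fin.ext (h.trans hkn.symm) ▸ hiS)
          exact ⟨ψ i, by rw [hg'def]; simp only [hφψ i hin]⟩
        · rintro ⟨j, rfl⟩
          exact ⟨φ j, hφS j, rfl⟩
      rw [himg]; exact heG
    · -- vs part included, k is a V-part
      set pn : Fin (n + 2) := ⟨n, by omega⟩ with hpn
      have hpnS : pn ∈ S := hmemS pn (fun h => hkn (by rw [← h]))
      have hv : g pn ∈ vs := by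
        have := hg pn hpnS
        simpa [W, hpn] using this
      obtain ⟨w, hw⟩ := hVne (ψ k)
      set g' : Fin (n + 1) → α := fun j => if j = ψ k then w else g (φ j) with hg'def
      have hg'mem : ∀ j, g' j ∈ V j := by
        intro j
        by_cases h : j = ψ k
        · simp only [g', if_pos h, h]; exact hw
        · simp only [g', if_neg h]
          have hφS : φ j ∈ S := by
            refine hmemS _ (fun hc => h ?_)
            rw [← hψφ j, hc]
          have := hg _ hφS
          simp only [W, if_neg (hφne j), hψφ j] at this
          exact this
      obtain ⟨hcard, hdis, hclique⟩ := hmem _ (hedge g' hg'mem)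
      apply (hclique _ hv).2
      rw [Finset.mem_powersetCard]
      refine ⟨?_, hcardimg⟩
      intro x hx
      obtain ⟨i, hiS, rfl⟩ := Finset.mem_image.1 hx
      by_cases hin : i = pn
      · subst hin; exact Finset.mem_insert_self _ _
      · have hival : i.val ≠ n := fun h => hin (Fin.ext h)
        apply Finset.mem_insert_of_mem
        apply Finset.mem_image.2
        refine ⟨ψ i, Finset.mem_univ _, ?_⟩
        have hik : i ≠ k := fun h => hkS (h ▸ hiS)
        have hne : ψ i ≠ ψ k := by
          intro h
          exact hik (by rw [← hφψ i hival, h, hφψ k hkn])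
        simp only [g', if_neg hne, hφψ i hival]
end

section
/- Let r ≥ 3, let a ≥ 2 and A, N be positive integers with N ≤ 2A and (N^{a/(a−1)})/(2(2A)^{1/(a−1)}) ≥ 1. Let X be a set of size N and 𝓐 a family of a-element subsets of X with |𝓐| = A. Then there exists Y ⊆ X with |Y| ≥ N^{a/(a−1)}/(2(2A)^{1/(a−1)}) such that no member of 𝓐 is a subset of Y. -/
open Finset

-- total weight is 1
lemma sum_w_one {ι : Type*} [DecidableEq ι] {p q : ℝ} (hpq : p + q = 1) (T : Finset ι) :
    ∑ S ∈ T.powerset, p ^ S.card * q ^ (T.card - S.card) = 1 := by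
  have h := Finset.prod_add (fun _ : ι => p) (fun _ : ι => q) T
  simp only [Finset.prod_const] at h
  have h2 : ∑ S ∈ T.powerset, p ^ S.card * q ^ (T \ S).card
      = ∑ S ∈ T.powerset, p ^ S.card * q ^ (T.card - S.card) := by
    apply Finset.sum_congr rfl
    intro S hS
    rw [Finset.card_sdiff_of_subset (Finset.mem_powerset.mp hS)]
  rw [h2] at h
  rw [← h, hpq, one_pow]

-- weight of the event s ⊆ S
lemma sum_w_subset {ι : Type*} [DecidableEq ι] {p q : ℝ} (hpq : p + q = 1)
    (X s : Finset ι) (hs : s ⊆ X) :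
    ∑ S ∈ X.powerset.filter (fun S => s ⊆ S), p ^ S.card * q ^ (X.card - S.card)
      = p ^ s.card := by
  have key : ∑ S ∈ X.powerset.filter (fun S => s ⊆ S), p ^ S.card * q ^ (X.card - S.card)
      = ∑ T ∈ (X \ s).powerset, p ^ s.card * (p ^ T.card * q ^ ((X \ s).card - T.card)) := by
    apply Finset.sum_bij' (fun S _ => S \ s) (fun T _ => T ∪ s)
    · intro S hS
      simp only [Finset.mem_filter, Finset.mem_powerset] at hS
      exact Finset.mem_powerset.mpr (Finset.sdiff_subset_sdiff hS.1 (le_refl s))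
    · intro T hT
      simp only [Finset.mem_powerset] at hT
      simp only [Finset.mem_filter, Finset.mem_powerset]
      constructor
      · exact Finset.union_subset (hT.trans Finset.sdiff_subset) hs
      · exact Finset.subset_union_right
    · intro S hS
      simp only [Finset.mem_filter, Finset.mem_powerset] at hS
      exact Finset.sdiff_union_of_subset hS.2
    · intro T hT
      simp only [Finset.mem_powerset] at hT
      apply Finset.union_sdiff_cancel_right
      exact Finset.disjoint_of_subset_left hT Finset.sdiff_disjoint
    · intro S hS
      simp only [Finset.mem_filter, Finset.mem_powerset] at hS
      have h1 : (S \ s).card = S.card - s.card := Finset.card_sdiff_of_subset hS.2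
      have h2 : ((X \ s).card) = X.card - s.card := Finset.card_sdiff_of_subset hs
      have hcs : s.card ≤ S.card := Finset.card_le_card hS.2
      have hcX : S.card ≤ X.card := Finset.card_le_card hS.1
      rw [h1, h2, ← mul_assoc, ← pow_add]
      have e1 : s.card + (S.card - s.card) = S.card := by omega
      have e2 : X.card - s.card - (S.card - s.card) = X.card - S.card := by omega
      rw [e1, e2]
  rw [key, ← Finset.mul_sum, sum_w_one hpq (X \ s), mul_one]

-- expected number of sets of a family contained in S
lemma sum_w_count {ι : Type*} [DecidableEq ι] {p q : ℝ} (hpq : p + q = 1)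
    (X : Finset ι) (ℬ : Finset (Finset ι)) (hB : ∀ s ∈ ℬ, s ⊆ X) :
    ∑ S ∈ X.powerset, p ^ S.card * q ^ (X.card - S.card)
        * ((ℬ.filter (fun s => s ⊆ S)).card : ℝ)
      = ∑ s ∈ ℬ, p ^ s.card := by
  have step : ∀ S ∈ X.powerset,
      p ^ S.card * q ^ (X.card - S.card) * ((ℬ.filter (fun s => s ⊆ S)).card : ℝ)
        = ∑ s ∈ ℬ, (if s ⊆ S then p ^ S.card * q ^ (X.card - S.card) else 0) := by
    intro S _
    rw [Finset.card_filter]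
    push_cast
    rw [Finset.mul_sum]
    apply Finset.sum_congr rfl
    intro s _
    by_cases h : s ⊆ S <;> simp [h]
  rw [Finset.sum_congr rfl step, Finset.sum_comm]
  apply Finset.sum_congr rfl
  intro s hs
  rw [← Finset.sum_filter]
  exact sum_w_subset hpq X s (hB s hs)

-- expected size of S
lemma sum_w_card {ι : Type*} [DecidableEq ι] {p q : ℝ} (hpq : p + q = 1) (X : Finset ι) :
    ∑ S ∈ X.powerset, p ^ S.card * q ^ (X.card - S.card) * (S.card : ℝ)
      = X.card * p := by
  have : ∀ S ∈ X.powerset,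
      p ^ S.card * q ^ (X.card - S.card) * (S.card : ℝ)
        = p ^ S.card * q ^ (X.card - S.card)
            * (((X.image (fun x => ({x} : Finset ι))).filter (fun s => s ⊆ S)).card : ℝ) := by
    intro S hS
    simp only [Finset.mem_powerset] at hS
    congr 2
    have himg : (X.image (fun x => ({x} : Finset ι))).filter (fun s => s ⊆ S)
        = S.image (fun x => ({x} : Finset ι)) := by
      ext t
      simp only [Finset.mem_filter, Finset.mem_image]
      constructor
      · rintro ⟨⟨x, hx, rfl⟩, h2⟩
        exact ⟨x, Finset.singleton_subset_iff.mp h2, rfl⟩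
      · rintro ⟨x, hx, rfl⟩
        exact ⟨⟨x, hS hx, rfl⟩, Finset.singleton_subset_iff.mpr hx⟩
    rw [himg, Finset.card_image_of_injective _ (fun x y h => by
      simpa using Finset.singleton_inj.mp h)]
  rw [Finset.sum_congr rfl this,
    sum_w_count hpq X _ (by rintro s hs; simp only [Finset.mem_image] at hs
                            obtain ⟨x, hx, rfl⟩ := hs
                            exact Finset.singleton_subset_iff.mpr hx)]
  rw [Finset.sum_image (fun x _ y _ h => by simpa using Finset.singleton_inj.mp h)]
  simp [Finset.card_singleton]

theorem stmt6 {ι : Type*} [DecidableEq ι] {r a N A : ℕ} (hr : 3 ≤ r) (ha : 2 ≤ a)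
    (hN : 0 < N) (hA : 0 < A) (hNA : N ≤ 2 * A)
    (hone : (1 : ℝ) ≤ (N : ℝ) ^ ((a : ℝ) / ((a : ℝ) - 1))
        / (2 * (2 * (A : ℝ)) ^ ((1 : ℝ) / ((a : ℝ) - 1))))
    (X : Finset ι) (hX : X.card = N)
    (𝓐 : Finset (Finset ι)) (h𝓐 : ∀ s ∈ 𝓐, s ⊆ X ∧ s.card = a)
    (h𝓐card : 𝓐.card = A) :
    ∃ Y ⊆ X,
      (N : ℝ) ^ ((a : ℝ) / ((a : ℝ) - 1))
          / (2 * (2 * (A : ℝ)) ^ ((1 : ℝ) / ((a : ℝ) - 1))) ≤ (Y.card : ℝ) ∧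
      ∀ s ∈ 𝓐, ¬ s ⊆ Y := by
  set B : ℝ := (N : ℝ) ^ ((a : ℝ) / ((a : ℝ) - 1))
      / (2 * (2 * (A : ℝ)) ^ ((1 : ℝ) / ((a : ℝ) - 1))) with hB
  have hNpos : (0 : ℝ) < N := by exact_mod_cast hN
  have hApos : (0 : ℝ) < A := by exact_mod_cast hA
  have h2A : (0 : ℝ) < 2 * A := by linarith
  have ha1 : (1 : ℝ) ≤ (a : ℝ) - 1 := by
    have : (2 : ℝ) ≤ a := by exact_mod_cast ha
    linarith
  have ha1pos : (0 : ℝ) < (a : ℝ) - 1 := by linarith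
  set p : ℝ := ((N : ℝ) / (2 * A)) ^ ((1 : ℝ) / ((a : ℝ) - 1)) with hp
  have hbase_pos : (0 : ℝ) < (N : ℝ) / (2 * A) := div_pos hNpos h2A
  have hbase_le : (N : ℝ) / (2 * A) ≤ 1 := by
    rw [div_le_one h2A]; exact_mod_cast hNA
  have hppos : 0 < p := Real.rpow_pos_of_pos hbase_pos _
  have hple : p ≤ 1 := Real.rpow_le_one (le_of_lt hbase_pos) hbase_le
    (by positivity)
  set q : ℝ := 1 - p with hq
  have hpq : p + q = 1 := by ring
  -- p ^ (a - 1) = N / (2A)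
  have hpow : p ^ (a - 1) = (N : ℝ) / (2 * A) := by
    have : ((a - 1 : ℕ) : ℝ) = (a : ℝ) - 1 := by
      push_cast [Nat.cast_sub (by omega : 1 ≤ a)]; ring
    rw [← Real.rpow_natCast p (a - 1), this, hp, ← Real.rpow_mul (le_of_lt hbase_pos),
      one_div, inv_mul_cancel₀ (ne_of_gt ha1pos), Real.rpow_one]
  have hpa : (A : ℝ) * p ^ a = p * N / 2 := by
    have h1 : p ^ a = p ^ (a - 1) * p := by
      rw [← pow_succ]; congr 1; omega
    rw [h1, hpow]; field_simp
  -- B = p * N / 2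
  have hBpN : B = p * N / 2 := by
    rw [hB, hp]
    rw [Real.div_rpow (le_of_lt hNpos) (le_of_lt h2A)]
    have : (a : ℝ) / ((a : ℝ) - 1) = 1 + 1 / ((a : ℝ) - 1) := by
      field_simp
      ring
    rw [this, Real.rpow_add hNpos, Real.rpow_one]
    have h2Apow : (0 : ℝ) < (2 * (A : ℝ)) ^ ((1 : ℝ) / ((a : ℝ) - 1)) :=
      Real.rpow_pos_of_pos h2A _
    field_simp
  -- the weighted sum
  set w : Finset ι → ℝ := fun S => p ^ S.card * q ^ (X.card - S.card) with hw
  have hwnonneg : ∀ S, 0 ≤ w S := by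
    intro S
    have : 0 ≤ q := by linarith
    positivity
  set bad : Finset ι → ℕ := fun S => (𝓐.filter (fun s => s ⊆ S)).card with hbad
  have hsum : ∑ S ∈ X.powerset, w S * ((S.card : ℝ) - (bad S : ℝ)) = B := by
    have e : ∀ S ∈ X.powerset, w S * ((S.card : ℝ) - (bad S : ℝ))
        = w S * (S.card : ℝ) - w S * (bad S : ℝ) := by intro S _; ring
    rw [Finset.sum_congr rfl e, Finset.sum_sub_distrib,
      sum_w_card hpq X, sum_w_count hpq X 𝓐 (fun s hs => (h𝓐 s hs).1)]
    have : ∑ s ∈ 𝓐, p ^ s.card = (A : ℝ) * p ^ a := by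
      rw [Finset.sum_congr rfl (fun s hs => by rw [(h𝓐 s hs).2]),
        Finset.sum_const, nsmul_eq_mul, h𝓐card]
    rw [this, hpa, hX, hBpN]
    ring
  -- there is S with (S.card : ℝ) - bad S ≥ B
  have hexists : ∃ S ∈ X.powerset, B ≤ (S.card : ℝ) - (bad S : ℝ) := by
    by_contra hcon
    push_neg at hcon
    have hw1 : ∑ S ∈ X.powerset, w S = 1 := sum_w_one hpq X
    have hlt : ∑ S ∈ X.powerset, w S * ((S.card : ℝ) - (bad S : ℝ))
        < ∑ S ∈ X.powerset, w S * B := by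
      apply Finset.sum_lt_sum
      · intro S hS
        exact mul_le_mul_of_nonneg_left (le_of_lt (hcon S hS)) (hwnonneg S)
      · refine ⟨X, Finset.mem_powerset_self X, ?_⟩
        have hwX : 0 < w X := by
          rw [hw]
          simp only [Nat.sub_self, pow_zero, mul_one]
          exact pow_pos hppos _
        exact mul_lt_mul_of_pos_left (hcon X (Finset.mem_powerset_self X)) hwX
    rw [hsum, ← Finset.sum_mul, hw1, one_mul] at hlt
    exact lt_irrefl B hlt
  obtain ⟨S, hSX, hSgood⟩ := hexists
  rw [Finset.mem_powerset] at hSX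
  -- deletion
  set D : Finset ι := (𝓐.filter (fun s => s ⊆ S)).biUnion
      (fun s => if h : s.Nonempty then {h.choose} else ∅) with hD
  have hDcard : D.card ≤ bad S := by
    calc D.card ≤ ∑ s ∈ 𝓐.filter (fun s => s ⊆ S),
        (if h : s.Nonempty then ({h.choose} : Finset ι) else ∅).card :=
          Finset.card_biUnion_le
      _ ≤ ∑ s ∈ 𝓐.filter (fun s => s ⊆ S), 1 := by
          apply Finset.sum_le_sum
          intro s _
          split <;> simp
      _ = bad S := by rw [Finset.sum_const, smul_eq_mul, mul_one]
  refine ⟨S \ D, (Finset.sdiff_subset).trans hSX, ?_, ?_⟩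
  · have h1 : S.card ≤ (S \ D).card + D.card := by
      calc S.card ≤ ((S \ D) ∪ D).card := Finset.card_le_card (by
            intro x hx
            by_cases hxD : x ∈ D
            · exact Finset.mem_union_right _ hxD
            · exact Finset.mem_union_left _ (Finset.mem_sdiff.mpr ⟨hx, hxD⟩))
        _ ≤ (S \ D).card + D.card := Finset.card_union_le _ _
    have : (S.card : ℝ) - (bad S : ℝ) ≤ ((S \ D).card : ℝ) := by
      have h1' : (S.card : ℝ) ≤ ((S \ D).card : ℝ) + (D.card : ℝ) := by exact_mod_cast h1
      have h2' : (D.card : ℝ) ≤ (bad S : ℝ) := by exact_mod_cast hDcard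
      linarith
    linarith
  · intro s hs hsub
    have hsS : s ⊆ S := hsub.trans Finset.sdiff_subset
    have hsne : s.Nonempty := by
      rw [← Finset.card_pos, (h𝓐 s hs).2]; omega
    have hmem : hsne.choose ∈ D := by
      rw [hD, Finset.mem_biUnion]
      refine ⟨s, Finset.mem_filter.mpr ⟨hs, hsS⟩, ?_⟩
      rw [dif_pos hsne]
      exact Finset.mem_singleton_self _
    have : hsne.choose ∈ S \ D := hsub hsne.choose_spec
    exact (Finset.mem_sdiff.mp this).2 hmem
end

section
/- Let r ≥ 3 and 1 ≤ a₁ ≤ ⋯ ≤ a_r be integers. Construct an (r−1)-uniform hypergraph H on vertex set A ⊔ B where |A| = ⌊n/r⌋, |B| = ⌈(r−1)n/r⌉, H restricted to B is any K_{r−1}^(r−1)(a₁,…,a_{r−1})-free (r−1)-uniform hypergraph, every (r−1)-set consisting of one vertex of A and an (r−2)-subset of B is an edge, and there are no other edges meeting A. Then H contains no copy of K_r^(r−1)(a₁,…,a_r). -/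
theorem stmt7 {α : Type*} [DecidableEq α] {r n : ℕ} (hr : 3 ≤ r)
    (a : ℕ → ℕ) (ha1 : ∀ i, 1 ≤ i → i ≤ r → 1 ≤ a i)
    (hmono : ∀ i, 1 ≤ i → i < r → a i ≤ a (i + 1))
    (A B : Finset α) (hAB : Disjoint A B)
    (hA : A.card = n / r) (hB : B.card = n - n / r)
    (GB : Finset (Finset α)) (hGB : ∀ e ∈ GB, e ⊆ B ∧ e.card = r - 1)
    (hGBfree : ¬ ContainsCMP GB (r - 1) (r - 1) (fun i => a (i.val + 1)))
    (H : Finset (Finset α))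
    (hH : ∀ e : Finset α,
      e ∈ H ↔ e ∈ GB ∨ ((e ∩ A).card = 1 ∧ e \ A ⊆ B ∧ e.card = r - 1)) :
    ¬ ContainsCMP H (r - 1) r (fun i => a (i.val + 1)) := by
  classical
  rintro ⟨V, hdisj, hcard, hedge⟩
  obtain ⟨m, rfl, hm2⟩ : ∃ m, r = m + 1 ∧ 2 ≤ m := ⟨r - 1, by omega, by omega⟩
  -- every part is nonempty
  have hVpos : ∀ j : Fin (m + 1), (V j).Nonempty := by
    intro j
    rw [← Finset.card_pos, hcard]
    have := j.isLt
    exact ha1 _ (by omega) (by omega)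
  set v : (j : Fin (m + 1)) → α := fun j => (hVpos j).choose with hv_def
  have hv : ∀ j, v j ∈ V j := fun j => (hVpos j).choose_spec
  -- basic properties of edges of H
  have hHmem : ∀ e ∈ H, e ⊆ A ∪ B ∧ (e ∩ A).card ≤ 1 := by
    intro e he
    rcases (hH e).1 he with h | ⟨h1, h2, _⟩
    · have hsub := (hGB e h).1
      constructor
      · exact hsub.trans Finset.subset_union_right
      · have : e ∩ A = ∅ := by
          rw [Finset.eq_empty_iff_forall_notMem]
          intro x hx
          rw [Finset.mem_inter] at hx
          exact (Finset.disjoint_right.1 hAB) (hsub hx.1) hx.2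
        simp [this]
    · constructor
      · intro x hx
        by_cases hxA : x ∈ A
        · exact Finset.mem_union_left _ hxA
        · exact Finset.mem_union_right _ (h2 (Finset.mem_sdiff.2 ⟨hx, hxA⟩))
      · omega
  -- key: any partial transversal extends to an edge
  have key : ∀ (I : Finset (Fin (m + 1))) (g : Fin (m + 1) → α), I.card ≤ m →
      (∀ j, g j ∈ V j) → ∃ e ∈ H, ∀ i ∈ I, g i ∈ e := by
    intro I g hI hg
    obtain ⟨S, hIS, hScard⟩ := Finset.exists_superset_card_eq (n := m) (s := I) hI (by simp)
    exact ⟨S.image g, hedge S hScard g (fun i _ => hg i),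
      fun i hi => Finset.mem_image_of_mem g (hIS hi)⟩
  -- every part lies in A ∪ B
  have hsub : ∀ j : Fin (m + 1), V j ⊆ A ∪ B := by
    intro j x hx
    have hgood : ∀ j', Function.update v j x j' ∈ V j' := by
      intro j'
      rcases eq_or_ne j' j with rfl | hne
      · simpa using hx
      · simpa [Function.update_of_ne hne] using hv j'
    obtain ⟨e, he, hxe⟩ := key {j} (Function.update v j x) (by simp; omega) hgood
    exact (hHmem e he).1 (by simpa using hxe j (Finset.mem_singleton_self j))
  -- at most one part meets A
  have honeA : ∃ k : Fin (m + 1), ∀ j, j ≠ k → Disjoint (V j) A := by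
    by_cases h : ∃ k x, x ∈ V k ∧ x ∈ A
    · obtain ⟨k, x, hxV, hxA⟩ := h
      refine ⟨k, fun j hjk => Finset.disjoint_left.2 fun y hyV hyA => ?_⟩
      have hgood : ∀ j', Function.update (Function.update v k x) j y j' ∈ V j' := by
        intro j'
        rcases eq_or_ne j' j with rfl | hne
        · simpa using hyV
        · rw [Function.update_of_ne hne]
          rcases eq_or_ne j' k with rfl | hne'
          · simpa using hxV
          · rw [Function.update_of_ne hne']; exact hv j'
      obtain ⟨e, he, hmem⟩ := key {j, k} (Function.update (Function.update v k x) j y)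
        (by
          have : ({j, k} : Finset (Fin (m + 1))).card ≤ 2 := Finset.card_insert_le _ _ |>.trans (by simp)
          omega)
        hgood
      · have hy : y ∈ e := by simpa using hmem j (by simp)
        have hx : x ∈ e := by
          have := hmem k (by simp)
          rwa [Function.update_of_ne (Ne.symm hjk), Function.update_self] at this
        have hne : y ≠ x := fun hyx =>
          (Finset.disjoint_left.1 (hdisj j k hjk)) hyV (hyx ▸ hxV)
        have h2 : ({y, x} : Finset α) ⊆ e ∩ A := by
          intro z hz
          rcases Finset.mem_insert.1 hz with rfl | hz
          · exact Finset.mem_inter.2 ⟨hy, hyA⟩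
          · rw [Finset.mem_singleton] at hz
            subst hz; exact Finset.mem_inter.2 ⟨hx, hxA⟩
        have := Finset.card_le_card h2
        rw [Finset.card_pair hne] at this
        have := (hHmem e he).2
        omega
    · push_neg at h
      exact ⟨0, fun j _ => Finset.disjoint_left.2 fun x hxV hxA => h j x hxV hxA⟩
  obtain ⟨k, hk⟩ := honeA
  have hVB : ∀ j, j ≠ k → V j ⊆ B := by
    intro j hj x hx
    rcases Finset.mem_union.1 (hsub j hx) with h | h
    · exact absurd h (Finset.disjoint_left.1 (hk j hj) hx)
    · exact h
  -- choose subsets of the right sizes inside the parts avoiding k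
  have hWex : ∀ i : Fin m, ∃ W ⊆ V (k.succAbove i), W.card = a (i.val + 1) := by
    intro i
    apply Finset.exists_subset_card_eq
    rw [hcard]
    rcases Fin.lt_or_le i.castSucc k with h | h
    · rw [Fin.succAbove_of_castSucc_lt _ _ h]
      simp
    · rw [Fin.succAbove_of_le_castSucc _ _ h]
      have := i.isLt
      simpa [Fin.val_succ] using hmono (i.val + 1) (by omega) (by omega)
  choose W hWsub hWcard using hWex
  have hσinj : Function.Injective k.succAbove := Fin.succAbove_right_injective
  apply hGBfree
  refine ⟨W, ?_, ?_, ?_⟩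
  · intro i j hij
    exact Finset.disjoint_of_subset_left (hWsub i)
      (Finset.disjoint_of_subset_right (hWsub j)
        (hdisj _ _ (fun h => hij (hσinj h))))
  · exact hWcard
  · intro S hS g hg
    have hg' : ∃ g' : Fin (m + 1) → α, ∀ i : Fin m, g' (k.succAbove i) = g i := by
      refine ⟨fun j => if h : ∃ i, k.succAbove i = j then g h.choose else g ⟨0, by omega⟩, ?_⟩
      intro i
      have h : ∃ i', k.succAbove i' = k.succAbove i := ⟨i, rfl⟩
      simp only [dif_pos h]
      exact congrArg g (hσinj h.choose_spec)
    obtain ⟨g', hg'⟩ := hg'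
    set S' : Finset (Fin (m + 1)) := S.image k.succAbove with hS'def
    have hS'card : S'.card = m := by
      rw [hS'def, Finset.card_image_of_injective _ hσinj]; exact hS
    have hmem : ∀ j ∈ S', g' j ∈ V j := by
      intro j hj
      obtain ⟨i, hi, rfl⟩ := Finset.mem_image.1 hj
      rw [hg' i]
      exact hWsub i (hg i hi)
    have heH : S'.image g' ∈ H := hedge S' hS'card g' hmem
    have heq : S'.image g' = S.image g := by
      rw [hS'def, Finset.image_image]
      exact Finset.image_congr fun i _ => hg' i
    rw [heq] at heH
    have heB : S.image g ⊆ B := by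
      intro x hx
      obtain ⟨i, hi, rfl⟩ := Finset.mem_image.1 hx
      exact hVB _ (Fin.succAbove_ne k i) (hWsub i (hg i hi))
    rcases (hH _).1 heH with h | ⟨h1, _, _⟩
    · exact h
    · exfalso
      have : S.image g ∩ A = ∅ := by
        rw [Finset.eq_empty_iff_forall_notMem]
        intro x hx
        rw [Finset.mem_inter] at hx
        exact (Finset.disjoint_right.1 hAB) (heB hx.1) hx.2
      rw [this] at h1
      simp at h1
end

section
/- Let r ≥ 3 and let H be an r-partite r-uniform hypergraph with parts V₁,…,V_r satisfying: (1) every (r−1)-subset of V(H) is contained in at most one edge of H; and (2) for every choice of pairs {x_i, y_i} ⊆ V_i with x_i ≠ y_i for each 1 ≤ i ≤ r, there exists some i such that ({x₁,…,x_r}∖{x_i}) ∪ {y_i} is not an edge of H. Let G = ∂^(r−1)H be the (r−1)-uniform shadow of H. Then every r-set spanning a clique K_r^(r−1) in G is an edge of H; in particular, no two cliques K_r^(r−1) in G share an edge of G, so G contains no copy of K_r^(r−1)(1,…,1,2). -/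
lemma stmt9_aux {α : Type*} [DecidableEq α] {r : ℕ} (hr : 3 ≤ r)
    (V : Fin r → Finset α) (hdisj : ∀ i j, i ≠ j → Disjoint (V i) (V j))
    (H : Finset (Finset α)) (hcard : ∀ e ∈ H, e.card = r)
    (hpart : ∀ e ∈ H, ∀ i, (e ∩ V i).card = 1)
    (h2 : ∀ x y : Fin r → α, (∀ i, x i ∈ V i) → (∀ i, y i ∈ V i) →
      (∀ i, x i ≠ y i) →
      ∃ i, insert (y i) ((Finset.image x Finset.univ).erase (x i)) ∉ H) :
    ∀ S : Finset α, SpansClique (shadowU H (r - 1)) r S → S ∈ H := by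
  classical
  -- every edge is covered by the parts
  have hcover : ∀ e ∈ H, ∀ a ∈ e, ∃ i, a ∈ V i := by
    intro e he a ha
    have hd : ∀ i ∈ (Finset.univ : Finset (Fin r)), ∀ j ∈ Finset.univ, i ≠ j →
        Disjoint (e ∩ V i) (e ∩ V j) := by
      intro i _ j _ hij
      exact Finset.disjoint_of_subset_left Finset.inter_subset_right
        (Finset.disjoint_of_subset_right Finset.inter_subset_right (hdisj i j hij))
    have hc : (Finset.univ.biUnion fun i => e ∩ V i).card = r := by
      rw [Finset.card_biUnion hd]
      simp [hpart e he]
    have hsub : (Finset.univ.biUnion fun i => e ∩ V i) ⊆ e := by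
      intro b hb
      rcases Finset.mem_biUnion.1 hb with ⟨i, _, hbi⟩
      exact (Finset.mem_inter.1 hbi).1
    have heq : (Finset.univ.biUnion fun i => e ∩ V i) = e :=
      Finset.eq_of_subset_of_card_le hsub (by rw [hc, hcard e he])
    rw [← heq] at ha
    rcases Finset.mem_biUnion.1 ha with ⟨i, _, hai⟩
    exact ⟨i, (Finset.mem_inter.1 hai).2⟩
  have huniq : ∀ a : α, ∀ i j : Fin r, a ∈ V i → a ∈ V j → i = j := by
    intro a i j hi hj
    by_contra hij
    exact Finset.disjoint_left.1 (hdisj i j hij) hi hj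
  intro S hS
  obtain ⟨hScard, hSG⟩ := hS
  -- each (r-1)-subset of S lies in an edge
  have hedge : ∀ s ∈ S, ∃ e ∈ H, S.erase s ⊆ e := by
    intro s hs
    have hmem : S.erase s ∈ S.powersetCard (r - 1) := by
      rw [Finset.mem_powersetCard]
      exact ⟨Finset.erase_subset _ _, by rw [Finset.card_erase_of_mem hs, hScard]⟩
    have := hSG _ hmem
    rcases Finset.mem_biUnion.1 this with ⟨e, he, hfe⟩
    exact ⟨e, he, (Finset.mem_powersetCard.1 hfe).1⟩
  -- each element of S lies in some part
  have hrpos : 0 < r := by omega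
  have hSpart : ∀ a ∈ S, ∃ i, a ∈ V i := by
    intro a ha
    -- pick s ∈ S with s ≠ a
    have h2S : 1 < S.card := by omega
    rcases Finset.one_lt_card.1 h2S with ⟨b, hb, c, hc, hbc⟩
    obtain ⟨s, hs, hsa⟩ : ∃ s ∈ S, s ≠ a := by
      by_cases hba : b = a
      · exact ⟨c, hc, by rw [← hba]; exact hbc.symm⟩
      · exact ⟨b, hb, hba⟩
    rcases hedge s hs with ⟨e, he, hse⟩
    exact hcover e he a (hse (Finset.mem_erase.2 ⟨Ne.symm hsa, ha⟩))
  -- two distinct elements of S lie in different parts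
  have hdiffparts : ∀ a ∈ S, ∀ b ∈ S, a ≠ b → ∀ i, a ∈ V i → b ∈ V i → False := by
    intro a ha b hb hab i hai hbi
    -- find s ∈ S, s ≠ a, s ≠ b
    have h3 : 2 < S.card := by omega
    have h1le : 1 ≤ (S \ {a, b}).card := by
      have hge := Finset.le_card_sdiff ({a, b} : Finset α) S
      have hpair : ({a, b} : Finset α).card ≤ 2 := (Finset.card_insert_le _ _).trans (by simp)
      omega
    rcases Finset.card_pos.1 h1le with ⟨s, hs⟩
    rw [Finset.mem_sdiff] at hs
    obtain ⟨hsS, hsnab⟩ := hs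
    simp only [Finset.mem_insert, Finset.mem_singleton, not_or] at hsnab
    rcases hedge s hsS with ⟨e, he, hse⟩
    have hae : a ∈ e := hse (Finset.mem_erase.2 ⟨fun h => hsnab.1 h.symm, ha⟩)
    have hbe : b ∈ e := hse (Finset.mem_erase.2 ⟨fun h => hsnab.2 h.symm, hb⟩)
    have : 2 ≤ (e ∩ V i).card := by
      have : ({a, b} : Finset α) ⊆ e ∩ V i := by
        intro z hz
        rcases Finset.mem_insert.1 hz with h | h
        · subst h; exact Finset.mem_inter.2 ⟨hae, hai⟩
        · rw [Finset.mem_singleton.1 h]; exact Finset.mem_inter.2 ⟨hbe, hbi⟩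
      calc 2 = ({a, b} : Finset α).card := (Finset.card_pair hab).symm
        _ ≤ _ := Finset.card_le_card this
    rw [hpart e he i] at this
    omega
  -- part-assignment function
  have hex : ∀ i : Fin r, ∃ a ∈ S, a ∈ V i := by
    -- image of part map is all of Fin r
    set p : α → Fin r := fun a =>
      if h : ∃ i, a ∈ V i then h.choose else ⟨0, hrpos⟩ with hp
    have hpa : ∀ a ∈ S, a ∈ V (p a) := by
      intro a ha
      have h := hSpart a ha
      simp only [hp, dif_pos h]
      exact h.choose_spec
    have hinj : Set.InjOn p S := by
      intro a ha b hb hab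
      by_contra hne
      exact hdiffparts a ha b hb hne (p a) (hpa a ha) (hab ▸ hpa b hb)
    have himg : S.image p = Finset.univ := by
      apply Finset.eq_univ_of_card
      rw [Finset.card_image_of_injOn hinj, hScard, Fintype.card_fin]
    intro i
    have : i ∈ S.image p := himg ▸ Finset.mem_univ i
    rcases Finset.mem_image.1 this with ⟨a, ha, hpai⟩
    exact ⟨a, ha, hpai ▸ hpa a ha⟩
  choose x hxS hxV using hex
  have hxinj : Function.Injective x := by
    intro i j hij
    by_contra hne
    -- x i = x j lies in V i and V j
    exact hne (huniq (x i) i j (hxV i) (hij ▸ hxV j))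
  have hximg : Finset.image x Finset.univ = S := by
    apply Finset.eq_of_subset_of_card_le
    · intro a ha
      rcases Finset.mem_image.1 ha with ⟨i, _, h⟩
      exact h ▸ hxS i
    · rw [Finset.card_image_of_injective _ hxinj, Finset.card_univ, Fintype.card_fin, hScard]
  by_contra hSH
  -- for each i, the edge containing S.erase (x i) gives y i
  have hey : ∀ i : Fin r, ∃ y, y ∈ V i ∧ y ≠ x i ∧ insert y (S.erase (x i)) ∈ H := by
    intro i
    rcases hedge (x i) (hxS i) with ⟨e, he, hse⟩
    have hcardE : e.card = r := hcard e he
    have hcardEr : (S.erase (x i)).card = r - 1 := by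
      rw [Finset.card_erase_of_mem (hxS i), hScard]
    have : ((e \ S.erase (x i)).card) = 1 := by
      rw [Finset.card_sdiff_of_subset hse, hcardE, hcardEr]; omega
    rcases Finset.card_eq_one.1 this with ⟨y, hy⟩
    have hye : y ∈ e ∧ y ∉ S.erase (x i) := by
      have : y ∈ e \ S.erase (x i) := hy ▸ Finset.mem_singleton_self y
      exact Finset.mem_sdiff.1 this
    have heq : insert y (S.erase (x i)) = e := by
      apply Finset.eq_of_subset_of_card_le
      · exact Finset.insert_subset hye.1 hse
      · rw [Finset.card_insert_of_notMem hye.2, hcardEr, hcardE]; omega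
    -- y ∈ V i
    rcases hcover e he y hye.1 with ⟨j, hyj⟩
    have hji : j = i := by
      by_contra hji
      -- x j ∈ S.erase (x i) ⊆ e, x j ∈ V j, y ∈ V j, y ≠ x j
      have hxj : x j ∈ e := hse (Finset.mem_erase.2 ⟨fun h => hji (hxinj h), hxS j⟩)
      have hyxj : y ≠ x j := by
        intro h
        exact hye.2 (h ▸ Finset.mem_erase.2 ⟨fun h' => hji (hxinj h'), hxS j⟩)
      have : 2 ≤ (e ∩ V j).card := by
        have hsub : ({y, x j} : Finset α) ⊆ e ∩ V j := by
          intro z hz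
          rcases Finset.mem_insert.1 hz with h | h
          · subst h; exact Finset.mem_inter.2 ⟨hye.1, hyj⟩
          · rw [Finset.mem_singleton.1 h]; exact Finset.mem_inter.2 ⟨hxj, hxV j⟩
        calc 2 = ({y, x j} : Finset α).card := (Finset.card_pair hyxj).symm
          _ ≤ _ := Finset.card_le_card hsub
      rw [hpart e he j] at this; omega
    have hyx : y ≠ x i := by
      intro h
      have hmem : insert y (S.erase (x i)) ∈ H := heq ▸ he
      rw [h, Finset.insert_erase (hxS i)] at hmem
      exact hSH hmem
    exact ⟨y, hji ▸ hyj, hyx, heq ▸ he⟩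
  choose y hyV hyx hyH using hey
  rcases h2 x y hxV hyV (fun i h => hyx i h.symm) with ⟨i, hni⟩
  rw [hximg] at hni
  exact hni (hyH i)

lemma stmt9_part2 {α : Type*} [DecidableEq α] {r : ℕ} (hr : 3 ≤ r)
    (H : Finset (Finset α))
    (h1 : ∀ f : Finset α, f.card = r - 1 → (H.filter fun e => f ⊆ e).card ≤ 1)
    (hclq : ∀ S : Finset α, SpansClique (shadowU H (r - 1)) r S → S ∈ H) :
    ¬ ContainsCMP (shadowU H (r - 1)) (r - 1) r
        (fun i => if (i : ℕ) = r - 1 then 2 else 1) := by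
  classical
  rintro ⟨W, hWdisj, hWcard, hWmem⟩
  set k : Fin r := ⟨r - 1, by omega⟩ with hk
  have hck : (W k).card = 2 := by
    have := hWcard k
    simpa [hk] using this
  obtain ⟨a, b, hab, hWk⟩ := Finset.card_eq_two.1 hck
  have hne : ∀ i, (W i).Nonempty := by
    intro i
    apply Finset.card_pos.1
    rw [hWcard i]
    dsimp only
    split <;> norm_num
  choose v hv using hne
  have hginj : ∀ g : Fin r → α, (∀ i, g i ∈ W i) → Function.Injective g := by
    intro g hg i j hij
    by_contra hne'
    exact Finset.disjoint_left.1 (hWdisj i j hne') (hg i) (hij ▸ hg j)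
  have hspan : ∀ g : Fin r → α, (∀ i, g i ∈ W i) → Finset.univ.image g ∈ H := by
    intro g hg
    apply hclq
    have hTcard : (Finset.univ.image g).card = r := by
      rw [Finset.card_image_of_injective _ (hginj g hg), Finset.card_univ, Fintype.card_fin]
    refine ⟨hTcard, ?_⟩
    intro f hf
    rw [Finset.mem_powersetCard] at hf
    obtain ⟨hfsub, hfcard⟩ := hf
    have hd1 : ((Finset.univ.image g) \ f).card = 1 := by
      rw [Finset.card_sdiff_of_subset hfsub, hTcard, hfcard]; omega
    obtain ⟨z, hz⟩ := Finset.card_eq_one.1 hd1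
    have hzT : z ∈ Finset.univ.image g ∧ z ∉ f :=
      Finset.mem_sdiff.1 (hz ▸ Finset.mem_singleton_self z)
    obtain ⟨j, _, hj⟩ := Finset.mem_image.1 hzT.1
    have hfeq : f = (Finset.univ.erase j).image g := by
      rw [Finset.image_erase (hginj g hg), hj]
      apply Finset.eq_of_subset_of_card_le
      · intro w hw
        exact Finset.mem_erase.2 ⟨fun h => hzT.2 (h ▸ hw), hfsub hw⟩
      · rw [Finset.card_erase_of_mem hzT.1, hTcard, hfcard]
    rw [hfeq]
    exact hWmem _ (by rw [Finset.card_erase_of_mem (Finset.mem_univ j), Finset.card_univ,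
      Fintype.card_fin]) g (fun i _ => hg i)
  -- the two transversals
  set ga : Fin r → α := fun i => if i = k then a else v i with hga
  set gb : Fin r → α := fun i => if i = k then b else v i with hgb
  have haW : a ∈ W k := hWk ▸ Finset.mem_insert_self a {b}
  have hbW : b ∈ W k := hWk ▸ Finset.mem_insert_of_mem (Finset.mem_singleton_self b)
  have hgaW : ∀ i, ga i ∈ W i := by
    intro i; by_cases h : i = k <;> simp [hga, h, haW, hv]
  have hgbW : ∀ i, gb i ∈ W i := by
    intro i; by_cases h : i = k <;> simp [hgb, h, hbW, hv]
  have hTa : Finset.univ.image ga ∈ H := hspan ga hgaW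
  have hTb : Finset.univ.image gb ∈ H := hspan gb hgbW
  have hTab : Finset.univ.image ga ≠ Finset.univ.image gb := by
    intro h
    have haTa : a ∈ Finset.univ.image ga := by
      apply Finset.mem_image.2 ⟨k, Finset.mem_univ k, by simp [hga]⟩
    rw [h] at haTa
    obtain ⟨j, _, hj⟩ := Finset.mem_image.1 haTa
    by_cases hjk : j = k
    · rw [hjk] at hj
      simp [hgb] at hj
      exact hab hj.symm
    · have : gb j = v j := by simp [hgb, hjk]
      rw [this] at hj
      exact Finset.disjoint_left.1 (hWdisj j k hjk) (hj ▸ hv j) haW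
  set f0 : Finset α := (Finset.univ.erase k).image ga with hf0
  have hf0card : f0.card = r - 1 := by
    rw [hf0, Finset.card_image_of_injective _ (hginj ga hgaW),
      Finset.card_erase_of_mem (Finset.mem_univ k), Finset.card_univ, Fintype.card_fin]
  have hf0a : f0 ⊆ Finset.univ.image ga :=
    Finset.image_subset_image (Finset.erase_subset _ _)
  have hf0b : f0 ⊆ Finset.univ.image gb := by
    have : f0 = (Finset.univ.erase k).image gb := by
      apply Finset.image_congr
      intro i hi
      have : i ≠ k := (Finset.mem_erase.1 hi).1
      simp [hga, hgb, this]
    rw [this]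
    exact Finset.image_subset_image (Finset.erase_subset _ _)
  have hsub2 : ({Finset.univ.image ga, Finset.univ.image gb} : Finset (Finset α)) ⊆
      H.filter fun e => f0 ⊆ e := by
    intro e he
    rcases Finset.mem_insert.1 he with h | h
    · subst h; exact Finset.mem_filter.2 ⟨hTa, hf0a⟩
    · rw [Finset.mem_singleton.1 h]; exact Finset.mem_filter.2 ⟨hTb, hf0b⟩
  have : 2 ≤ (H.filter fun e => f0 ⊆ e).card := by
    calc 2 = ({Finset.univ.image ga, Finset.univ.image gb} : Finset (Finset α)).card :=
        (Finset.card_pair hTab).symm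
      _ ≤ _ := Finset.card_le_card hsub2
  have := h1 f0 hf0card
  omega

theorem stmt9 {α : Type*} [DecidableEq α] [Fintype α] {r : ℕ} (hr : 3 ≤ r)
    (V : Fin r → Finset α) (hdisj : ∀ i j, i ≠ j → Disjoint (V i) (V j))
    (H : Finset (Finset α)) (hcard : ∀ e ∈ H, e.card = r)
    (hpart : ∀ e ∈ H, ∀ i, (e ∩ V i).card = 1)
    (h1 : ∀ f : Finset α, f.card = r - 1 → (H.filter fun e => f ⊆ e).card ≤ 1)
    (h2 : ∀ x y : Fin r → α, (∀ i, x i ∈ V i) → (∀ i, y i ∈ V i) →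
      (∀ i, x i ≠ y i) →
      ∃ i, insert (y i) ((Finset.image x Finset.univ).erase (x i)) ∉ H) :
    (∀ S : Finset α, SpansClique (shadowU H (r - 1)) r S → S ∈ H) ∧
    ¬ ContainsCMP (shadowU H (r - 1)) (r - 1) r
        (fun i => if (i : ℕ) = r - 1 then 2 else 1) := by
  have key := stmt9_aux hr V hdisj H hcard hpart h2
  exact ⟨key, stmt9_part2 hr H h1 key⟩
end

section
/- Let ℓ ≥ r ≥ 3, let F be an (r−1)-uniform hypergraph on vertices v₁,…,v_ℓ, let G be an (r−1)-uniform hypergraph with a vertex partition W₁ ⊔ ⋯ ⊔ W_ℓ, and let 𝓗 be the ℓ-partite (ℓ−1)-uniform auxiliary hypergraph whose edges are the crossing (ℓ−1)-tuples (x_j)_{j∈[ℓ]∖{i}} that extend (by some x_i ∈ W_i) to an aligned copy of F in G. Suppose 𝓗 contains a copy of K_ℓ^(ℓ−1)(a,…,a) with parts U_i ⊆ W_i, |U_i| = a. Then for every (x₁,…,x_ℓ) ∈ U₁ × ⋯ × U_ℓ and every edge {v_{i₁},…,v_{i_{r−1}}} of F, the set {x_{i₁},…,x_{i_{r−1}}}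 is an edge of G; consequently G contains a copy of the blowup F(a). -/
/-- `G` contains a copy of the blowup `F(a)` of the hypergraph `F` on vertex set `Fin ℓ`:
disjoint sets `V i` of size `a`, one for each vertex of `F`, such that every transversal
of an edge of `F` is an edge of `G`. -/
def ContainsBlowup {α : Type*} [DecidableEq α] {ℓ : ℕ} (G : Finset (Finset α))
    (F : Finset (Finset (Fin ℓ))) (a : ℕ) : Prop :=
  ∃ V : Fin ℓ → Finset α,
    (∀ i j, i ≠ j → Disjoint (V i) (V j)) ∧ (∀ i, (V i).card = a) ∧
    ∀ x : Fin ℓ → α, (∀ i, x i ∈ V i) → ∀ e ∈ F, e.image x ∈ G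

theorem stmt11 {α : Type*} [DecidableEq α] {r ℓ a : ℕ}
    (hr : 3 ≤ r) (hℓ : r ≤ ℓ) (ha : 1 ≤ a)
    (F : Finset (Finset (Fin ℓ))) (hF : ∀ e ∈ F, e.card = r - 1)
    (G : Finset (Finset α)) (hG : ∀ e ∈ G, e.card = r - 1)
    (W : Fin ℓ → Finset α) (hW : ∀ i j, i ≠ j → Disjoint (W i) (W j))
    (U : Fin ℓ → Finset α) (hUW : ∀ i, U i ⊆ W i) (hU : ∀ i, (U i).card = a)
    -- the auxiliary hypergraph 𝓗 contains `K_ℓ^(ℓ-1)(a,…,a)` with parts `U i ⊆ W i`: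
    -- every crossing `(ℓ-1)`-tuple from the `U j`, `j ≠ i`, extends by some `x_i ∈ W i`
    -- to an aligned copy of `F` in `G`
    (hH : ∀ i : Fin ℓ, ∀ g : Fin ℓ → α, (∀ j, j ≠ i → g j ∈ U j) →
      ∃ xi ∈ W i, ∀ e ∈ F, e.image (Function.update g i xi) ∈ G) :
    (∀ x : Fin ℓ → α, (∀ i, x i ∈ U i) → ∀ e ∈ F, e.image x ∈ G) ∧
    ContainsBlowup G F a := by

  have key : ∀ x : Fin ℓ → α, (∀ i, x i ∈ U i) → ∀ e ∈ F, e.image x ∈ G := by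
    intro x hx e he
    have hcard : e.card < ℓ := by
      have := hF e he
      have : e.card = r - 1 := this
      omega
    obtain ⟨i, hi⟩ : ∃ i, i ∉ e := by
      by_contra h
      push_neg at h
      rw [Finset.eq_univ_iff_forall.mpr h, Finset.card_univ, Fintype.card_fin] at hcard
      omega
    obtain ⟨xi, -, hxi⟩ := hH i x (fun j _ => hx j)
    have := hxi e he
    have himg : e.image (Function.update x i xi) = e.image x := by
      apply Finset.image_congr
      intro j hj
      exact Function.update_of_ne (by rintro rfl; exact hi hj) _ _
    rwa [himg] at this
  exact ⟨key, U, fun i j hij => (hW i j hij).mono (hUW i) (hUW j), hU, key⟩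
end

section
/- Let r ≥ 3 and 1 ≤ a₁ ≤ ⋯ ≤ a_r, and let G be a K_r^(r−1)(a₁,…,a_r)-free (r−1)-uniform hypergraph on n vertices with a_{r−1} ≥ 2. Define 𝓐 to be the family of all sets {T₁,…,T_{a_{r−1}}} of a_{r−1} distinct cliques K_r^(r−1) of G that share a common edge of G. Then |𝓐| ≤ C(n, a_{r−1}) · max over a_{r−1}-sets {v₁,…,v_{a_{r−1}}} of the number of edges of G(v₁) ∩ ⋯ ∩ G(v_{a_{r−1}}), where each such intersection hypergraph is K_{r−1}^(r−1)(a₁,…,a_{r−2},a_r)-free. -/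
theorem stmt12 {n r : ℕ} (hr : 3 ≤ r)
    (a : ℕ → ℕ) (ha1 : ∀ i, 1 ≤ i → i ≤ r → 1 ≤ a i)
    (hmono : ∀ i, 1 ≤ i → i < r → a i ≤ a (i + 1)) (ha2 : 2 ≤ a (r - 1))
    (G : Finset (Finset (Fin n))) (hG : ∀ e ∈ G, e.card = r - 1)
    (hfree : ¬ ContainsCMP G (r - 1) r (fun i => a (i.val + 1))) :
    -- each intersection hypergraph is `K_{r-1}^(r-1)(a₁,…,a_{r-2},a_r)`-free
    (∀ vs : Finset (Fin n), vs.card = a (r - 1) →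
      ¬ ContainsCMP (interGraph G r vs) (r - 1) (r - 1)
          (fun i => if (i : ℕ) = r - 2 then a r else a (i.val + 1))) ∧
    -- `|𝓐| ≤ C(n, a_{r-1}) · max_{vs} |G(v₁) ∩ ⋯ ∩ G(v_{a_{r-1}})|`
    (Finset.univ.filter fun T : Finset (Finset (Fin n)) =>
        T.card = a (r - 1) ∧ (∀ S ∈ T, SpansClique G r S) ∧
        ∃ e ∈ G, ∀ S ∈ T, e ⊆ S).card ≤
      n.choose (a (r - 1)) *
        ((Finset.univ.powersetCard (a (r - 1))).sup fun vs => (interGraph G r vs).card) := by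
  classical
  constructor
  · -- Part 1
    rintro vs hvs ⟨V, hdisj, hcard, hedge⟩
    apply hfree
    have hVne : ∀ i, (V i).Nonempty := by
      intro i
      rw [← Finset.card_pos, hcard]
      dsimp only
      split
      · exact ha1 r (by omega) le_rfl
      · exact ha1 (i.val + 1) (by omega) (by have := i.isLt; omega)
    let p : Fin (r - 1) → Fin n := fun i => (hVne i).choose
    have hp : ∀ i, p i ∈ V i := fun i => (hVne i).choose_spec
    have hE : ∀ g : Fin (r - 1) → Fin n, (∀ i, g i ∈ V i) →
        (Finset.univ.image g) ∈ interGraph G r vs := by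
      intro g hg
      exact hedge Finset.univ (by simp) g (fun i _ => hg i)
    have hEmem : ∀ e ∈ interGraph G r vs, e.card = r - 1 ∧ Disjoint e vs ∧
        ∀ v ∈ vs, SpansClique G r (insert v e) := by
      intro e he
      simp only [interGraph, Finset.mem_filter, Finset.mem_powersetCard] at he
      exact ⟨he.1.2, he.2.1, he.2.2⟩
    have hVvs : ∀ i, Disjoint (V i) vs := by
      intro i
      rw [Finset.disjoint_left]
      intro x hx hxvs
      have hmem := hE (Function.update p i x) ?_
      · have hd := (hEmem _ hmem).2.1
        rw [Finset.disjoint_left] at hd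
        exact hd (Finset.mem_image.2 ⟨i, Finset.mem_univ i, by simp⟩) hxvs
      · intro j
        rcases eq_or_ne j i with rfl | hji
        · simpa using hx
        · simpa [Function.update_of_ne hji] using hp j
    -- index juggling
    let ι : Fin (r - 1) → Fin r := fun i =>
      if h : i.val < r - 2 then ⟨i.val, by omega⟩ else ⟨r - 1, by omega⟩
    let κ : Fin r → Fin (r - 1) := fun m =>
      if h : m.val < r - 2 then ⟨m.val, by omega⟩ else ⟨r - 2, by omega⟩
    have hιv : ∀ i, (ι i).val = if i.val < r - 2 then i.val else r - 1 := by
      intro i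
      simp only [ι]
      split_ifs <;> rfl
    have hκv : ∀ m : Fin r, (κ m).val = if m.val < r - 2 then m.val else r - 2 := by
      intro m
      simp only [κ]
      split_ifs <;> rfl
    have hκι : ∀ i, κ (ι i) = i := by
      intro i
      have hi := i.isLt
      apply Fin.ext
      rw [hκv, hιv]
      split_ifs <;> omega
    have hιval : ∀ i, (ι i).val ≠ r - 2 := by
      intro i
      rw [hιv]
      split_ifs <;> omega
    have hικ : ∀ m : Fin r, m.val ≠ r - 2 → ι (κ m) = m := by
      intro m hm
      have hmlt := m.isLt
      apply Fin.ext
      rw [hιv, hκv]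
      split_ifs <;> omega
    let W : Fin r → Finset (Fin n) := fun m => if m.val = r - 2 then vs else V (κ m)
    have hWι : ∀ i, W (ι i) = V i := by
      intro i
      simp only [W, if_neg (hιval i), hκι]
    have hWcard : ∀ m, (W m).card = a (m.val + 1) := by
      intro m
      have hmlt := m.isLt
      simp only [W]
      split_ifs with hm
      · rw [hvs]; congr 1; omega
      · simp only [hcard]
        have hκ := hκv m
        by_cases h1 : m.val < r - 2
        · rw [if_pos h1] at hκ
          rw [hκ, if_neg hm]
        · rw [if_neg h1] at hκ
          rw [hκ, if_pos rfl]
          congr 1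
          omega
    have hWdisj : ∀ m m', m ≠ m' → Disjoint (W m) (W m') := by
      intro m m' hne
      simp only [W]
      split_ifs with h1 h2 h2
      · exact absurd (Fin.ext (h1.trans h2.symm)) hne
      · exact (hVvs _).symm
      · exact hVvs _
      · refine hdisj _ _ ?_
        intro h
        exact hne (by rw [← hικ m h1, h, hικ m' h2])
    refine ⟨W, hWdisj, hWcard, ?_⟩
    intro S hS g hg
    have hcompl : Sᶜ.card = 1 := by
      rw [Finset.card_compl, hS]
      simp only [Fintype.card_fin]
      omega
    obtain ⟨m, hm⟩ := Finset.card_eq_one.1 hcompl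
    have hmS : ∀ i : Fin r, i ∈ S ↔ i ≠ m := by
      intro i
      have h1 : i ∉ S ↔ i = m := by
        rw [← Finset.mem_compl, hm, Finset.mem_singleton]
      constructor
      · intro h h'
        exact (h1.2 h') h
      · intro h
        by_contra h'
        exact h (h1.1 h')
    by_cases hmv : m.val = r - 2
    · -- the `vs` part is the one omitted
      have hg'V : ∀ i, g (ι i) ∈ V i := by
        intro i
        have hiS : ι i ∈ S := (hmS _).2 (fun h => hιval i (h ▸ hmv))
        have := hg (ι i) hiS
        rwa [hWι] at this
      have he := hE (fun i => g (ι i)) hg'V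
      have heq : S.image g = Finset.univ.image (fun i => g (ι i)) := by
        ext x
        simp only [Finset.mem_image]
        constructor
        · rintro ⟨i, hi, rfl⟩
          have hne : i ≠ m := (hmS i).1 hi
          have hival : i.val ≠ r - 2 := fun h => hne (Fin.ext (h.trans hmv.symm))
          exact ⟨κ i, Finset.mem_univ _, by rw [hικ i hival]⟩
        · rintro ⟨i, -, rfl⟩
          exact ⟨ι i, (hmS _).2 (fun h => hιval i (h ▸ hmv)), rfl⟩
      rw [heq]
      obtain ⟨hecard, hdisjvs, hcl⟩ := hEmem _ he
      have hvsne : vs.Nonempty := by rw [← Finset.card_pos, hvs]; omega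
      obtain ⟨v, hv⟩ := hvsne
      refine (hcl v hv).2 _ ?_
      rw [Finset.mem_powersetCard]
      exact ⟨Finset.subset_insert _ _, hecard⟩
    · -- the `vs` part is present
      have hrlt : r - 2 < r := by omega
      have hμS : (⟨r - 2, hrlt⟩ : Fin r) ∈ S :=
        (hmS _).2 (fun h => hmv ((congrArg Fin.val h).symm))
      have hvvs : g ⟨r - 2, hrlt⟩ ∈ vs := by
        have := hg _ hμS
        simpa only [W, if_pos rfl] using this
      have hg'V : ∀ i, (if ι i = m then p i else g (ι i)) ∈ V i := by
        intro i
        split_ifs with h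
        · exact hp i
        · have hiS : ι i ∈ S := (hmS _).2 h
          have := hg (ι i) hiS
          rwa [hWι] at this
      have he := hE _ hg'V
      obtain ⟨hecard, hdisjvs, hcl⟩ := hEmem _ he
      have hsp := hcl _ hvvs
      refine hsp.2 _ ?_
      rw [Finset.mem_powersetCard]
      constructor
      · intro x hx
        obtain ⟨i, hi, rfl⟩ := Finset.mem_image.1 hx
        by_cases hiv : i.val = r - 2
        · rw [show i = ⟨r - 2, hrlt⟩ from Fin.ext hiv]
          exact Finset.mem_insert_self _ _
        · apply Finset.mem_insert_of_mem
          have hne : i ≠ m := (hmS i).1 hi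
          refine Finset.mem_image.2 ⟨κ i, Finset.mem_univ _, ?_⟩
          rw [hικ i hiv, if_neg hne]
      · have hinj : Set.InjOn g S := by
          intro x hx y hy hxy
          by_contra hne
          have hd := hWdisj x y hne
          rw [Finset.disjoint_left] at hd
          exact hd (hg x hx) (hxy ▸ hg y hy)
        rw [Finset.card_image_of_injOn hinj, hS]
  · -- Part 2
    let eOf : Finset (Finset (Fin n)) → Finset (Fin n) := fun T =>
      if h : ∃ e ∈ G, ∀ S ∈ T, e ⊆ S then h.choose else ∅
    have heOf : ∀ T : Finset (Finset (Fin n)), (∃ e ∈ G, ∀ S ∈ T, e ⊆ S) →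
        eOf T ∈ G ∧ ∀ S ∈ T, eOf T ⊆ S := by
      intro T h
      simp only [eOf, dif_pos h]
      exact h.choose_spec
    have main : ∀ T : Finset (Finset (Fin n)), T.card = a (r - 1) →
        (∀ S ∈ T, SpansClique G r S) → (∃ e ∈ G, ∀ S ∈ T, e ⊆ S) →
        (T.sup id \ eOf T) ∈ Finset.univ.powersetCard (a (r - 1)) ∧
        eOf T ∈ interGraph G r (T.sup id \ eOf T) ∧
        T = (T.sup id \ eOf T).image (fun v => insert v (eOf T)) := by
      intro T hTcard hTcl hTex
      obtain ⟨heG, hesub⟩ := heOf T hTex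
      have hecard : (eOf T).card = r - 1 := hG _ heG
      have hScard : ∀ S ∈ T, S.card = r := fun S hS => (hTcl S hS).1
      have hsd : ∀ S ∈ T, (S \ eOf T).card = 1 := by
        intro S hS
        rw [Finset.card_sdiff_of_subset (hesub S hS), hScard S hS, hecard]
        omega
      have hrecS : ∀ S ∈ T, ∀ x ∈ S \ eOf T, S = insert x (eOf T) := by
        intro S hS x hx
        obtain ⟨hxS, hxe⟩ := Finset.mem_sdiff.1 hx
        refine (Finset.eq_of_subset_of_card_le
          (Finset.insert_subset hxS (hesub S hS)) ?_).symm
        rw [Finset.card_insert_of_notMem hxe, hecard, hScard S hS]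
        omega
      have hvseq : T.sup id \ eOf T = T.biUnion (fun S => S \ eOf T) := by
        ext x
        simp only [Finset.mem_sdiff, Finset.mem_sup, Finset.mem_biUnion, id]
        tauto
      have hvscard : (T.sup id \ eOf T).card = a (r - 1) := by
        rw [hvseq, Finset.card_biUnion ?_]
        · rw [Finset.sum_congr rfl hsd]
          simp [hTcard]
        · intro S hS S' hS' hne
          rw [Function.onFun, Finset.disjoint_left]
          intro x hx hx'
          exact hne ((hrecS S hS x hx).trans (hrecS S' hS' x hx').symm)
      refine ⟨?_, ?_, ?_⟩
      · rw [Finset.mem_powersetCard]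
        exact ⟨Finset.subset_univ _, hvscard⟩
      · simp only [interGraph, Finset.mem_filter, Finset.mem_powersetCard]
        refine ⟨⟨Finset.subset_univ _, hecard⟩, Finset.sdiff_disjoint.symm, ?_⟩
        intro v hv
        rw [hvseq] at hv
        obtain ⟨S, hS, hvS⟩ := Finset.mem_biUnion.1 hv
        rw [← hrecS S hS v hvS]
        exact hTcl S hS
      · ext S
        simp only [Finset.mem_image]
        constructor
        · intro hS
          obtain ⟨x, hx⟩ := Finset.card_eq_one.1 (hsd S hS)
          have hxm : x ∈ S \ eOf T := hx ▸ Finset.mem_singleton_self x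
          refine ⟨x, ?_, (hrecS S hS x hxm).symm⟩
          rw [hvseq]
          exact Finset.mem_biUnion.2 ⟨S, hS, hxm⟩
        · rintro ⟨v, hv, rfl⟩
          rw [hvseq] at hv
          obtain ⟨S, hS, hvS⟩ := Finset.mem_biUnion.1 hv
          rw [← hrecS S hS v hvS]
          exact hS
    refine le_trans (Finset.card_le_card_of_injOn
      (t := (Finset.univ.powersetCard (a (r - 1))).sigma fun vs => interGraph G r vs)
      (fun T => ⟨T.sup id \ eOf T, eOf T⟩) ?_ ?_) ?_
    · intro T hT
      simp only [Finset.mem_coe, Finset.mem_filter] at hT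
      obtain ⟨-, h1, h2, h3⟩ := hT
      obtain ⟨hm1, hm2, -⟩ := main T h1 h2 h3
      rw [Finset.mem_coe, Finset.mem_sigma]
      exact ⟨hm1, hm2⟩
    · intro T hT T' hT' heq
      simp only [Finset.coe_filter, Set.mem_setOf_eq] at hT hT'
      obtain ⟨-, h1, h2, h3⟩ := hT
      obtain ⟨-, h1', h2', h3'⟩ := hT'
      obtain ⟨-, -, hrec⟩ := main T h1 h2 h3
      obtain ⟨-, -, hrec'⟩ := main T' h1' h2' h3'
      have hfst : T.sup id \ eOf T = T'.sup id \ eOf T' := congrArg Sigma.fst heq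
      have hsnd : eOf T = eOf T' := by
        have := (Sigma.mk.inj_iff.1 heq).2
        exact eq_of_heq this
      rw [hrec, hrec', hfst, hsnd]
    · rw [Finset.card_sigma]
      calc ∑ vs ∈ Finset.univ.powersetCard (a (r - 1)), (interGraph G r vs).card
          ≤ (Finset.univ.powersetCard (a (r - 1))).card *
            ((Finset.univ.powersetCard (a (r - 1))).sup fun vs => (interGraph G r vs).card) := by
            rw [← smul_eq_mul]
            exact Finset.sum_le_card_nsmul _ _ _ (fun vs hvs => Finset.le_sup (f := fun vs => (interGraph G r vs).card) hvs)
        _ = _ := by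
            rw [Finset.card_powersetCard, Finset.card_univ, Fintype.card_fin]
end

section
/- For every r ≥ 3 and integers 1 ≤ a₁ ≤ ⋯ ≤ a_r, ex(n, K_r^(r−1), K_r^(r−1)(a₁,…,a_r)) ≥ ⌊n/r⌋ · ex(⌈(r−1)n/r⌉, K_{r−1}^(r−1)(a₁,…,a_{r−1})), where ex(m, F) denotes the Turán number (maximum number of edges in an F-free (r−1)-uniform hypergraph on m vertices) and ex(n, T, F) the generalized Turán number (maximum number of copies of T in an F-free hypergraph on n vertices). -/
/-- The number of copies of `K_r^(r-1)` in the `(r-1)`-uniform hypergraph `G`. -/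
def cliqueCount {α : Type*} [DecidableEq α] [Fintype α]
    (G : Finset (Finset α)) (r : ℕ) : ℕ :=
  ((Finset.univ.powersetCard r).filter fun S => ∀ f ∈ S.powersetCard (r - 1), f ∈ G).card

/-- The generalized Turán number `ex(m, K_r^(r-1), K_r^(r-1)(c))`: the maximum number of
copies of `K_r^(r-1)` over all `K_r^(r-1)(c)`-free `(r-1)`-uniform hypergraphs on `m`
vertices. -/
noncomputable def exCliques (m r : ℕ) (c : Fin r → ℕ) : ℕ :=
  sSup {k | ∃ G : Finset (Finset (Fin m)), (∀ e ∈ G, e.card = r - 1) ∧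
    ¬ ContainsCMP G (r - 1) r c ∧ cliqueCount G r = k}

/-- The Turán number `ex(m, K_ℓ^(t)(c))`: the maximum number of edges in a
`K_ℓ^(t)(c)`-free `t`-uniform hypergraph on `m` vertices. -/
noncomputable def exTuran (m t ℓ : ℕ) (c : Fin ℓ → ℕ) : ℕ :=
  sSup {k | ∃ G : Finset (Finset (Fin m)), (∀ e ∈ G, e.card = t) ∧
    ¬ ContainsCMP G t ℓ c ∧ G.card = k}


open Finset

lemma amono (a : ℕ → ℕ) (r : ℕ) (hmono : ∀ i, 1 ≤ i → i < r → a i ≤ a (i + 1)) :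
    ∀ p q, 1 ≤ p → p ≤ q → q ≤ r → a p ≤ a q := by
  intro p q hp hpq hqr
  induction q with
  | zero => omega
  | succ q ih =>
    rcases Nat.lt_or_ge p (q+1) with h | h
    · exact le_trans (ih (by omega) (by omega)) (hmono q (by omega) (by omega))
    · have : p = q + 1 := by omega
      subst this; exact le_rfl

lemma empty_free {α : Type*} [DecidableEq α] (t ℓ : ℕ) (c : Fin ℓ → ℕ)
    (hc : ∀ i, 1 ≤ c i) (ht : t ≤ ℓ) :
    ¬ ContainsCMP (∅ : Finset (Finset α)) t ℓ c := by
  rintro ⟨V, -, hcard, hcomp⟩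
  have hne : ∀ i, (V i).Nonempty := fun i => Finset.card_pos.mp (by rw [hcard]; exact hc i)
  obtain ⟨S, -, hS2⟩ := Finset.exists_subset_card_eq
    (show t ≤ (univ : Finset (Fin ℓ)).card by simpa)
  have := hcomp S hS2 (fun i => (hne i).choose) (fun i _ => (hne i).choose_spec)
  simp at this

lemma succAbove_val_le {s : ℕ} (p : Fin (s+1)) (i : Fin s) : (i : ℕ) ≤ (p.succAbove i : ℕ) := by
  unfold Fin.succAbove
  split <;> simp

theorem stmt16 {r n : ℕ} (hr : 3 ≤ r)
    (a : ℕ → ℕ) (ha1 : ∀ i, 1 ≤ i → i ≤ r → 1 ≤ a i)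
    (hmono : ∀ i, 1 ≤ i → i < r → a i ≤ a (i + 1)) :
    (n / r) * exTuran (n - n / r) (r - 1) (r - 1) (fun i => a (i.val + 1)) ≤
      exCliques n r (fun i => a (i.val + 1)) := by
  obtain ⟨s, hs2, rfl⟩ : ∃ s, 2 ≤ s ∧ r = s + 1 := ⟨r - 1, by omega, by omega⟩
  show (n / (s+1)) * exTuran (n - n / (s+1)) s s (fun i => a (i.val + 1)) ≤
      exCliques n (s+1) (fun i => a (i.val + 1))
  set q := n / (s + 1) with hq
  rcases Nat.eq_zero_or_pos q with hq0 | hq1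
  · rw [hq0]; simp
  set m := n - q with hm
  have hqn : q ≤ n := Nat.div_le_self n (s+1)
  have hns : s + 1 ≤ n := by
    by_contra h
    have : q = 0 := Nat.div_eq_of_lt (by omega)
    omega
  have hqm : q + m ≤ n := by omega
  -- the extremal H on Fin m
  have hcpos : ∀ i : Fin s, 1 ≤ a (i.val + 1) := fun i => ha1 _ (by omega) (by omega)
  obtain ⟨H, hHe, hHfree, hHcard⟩ :
      ∃ H : Finset (Finset (Fin m)), (∀ e ∈ H, e.card = s) ∧
        ¬ ContainsCMP H s s (fun i => a (i.val + 1)) ∧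
        H.card = exTuran m s s (fun i => a (i.val + 1)) := by
    have hmem := Nat.sSup_mem (s := {k | ∃ G : Finset (Finset (Fin m)), (∀ e ∈ G, e.card = s) ∧
        ¬ ContainsCMP G s s (fun i => a (i.val + 1)) ∧ G.card = k})
      ⟨0, ∅, by simp, empty_free s s _ hcpos le_rfl, by simp⟩
      ⟨(Finset.univ.powersetCard s).card, by
        rintro k ⟨G, hGe, -, rfl⟩
        refine Finset.card_le_card fun e he => ?_
        simp [Finset.mem_powersetCard, hGe e he]⟩
    obtain ⟨G, h1, h2, h3⟩ := hmem
    exact ⟨G, h1, h2, h3⟩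
  rw [← hHcard]
  -- the embedding
  have hfd : ∀ x : Fin m, (x : ℕ) + q < n := fun x => by have := x.isLt; omega
  set f : Fin m → Fin n := fun x => ⟨(x : ℕ) + q, hfd x⟩ with hfdef
  have hf : Function.Injective f := by
    intro x y hxy
    have : (x : ℕ) + q = (y : ℕ) + q := congrArg Fin.val hxy
    exact Fin.ext (by omega)
  set H' := H.image (Finset.image f) with hH'
  set X := (Finset.univ.powersetCard s).filter
    (fun e : Finset (Fin n) => (e.filter (fun x : Fin n => (x : ℕ) < q)).card = 1) with hX
  set G := H' ∪ X with hG
  -- basic facts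
  have hH'B : ∀ e ∈ H', ∀ x ∈ e, q ≤ (x : ℕ) := by
    intro e he x hx
    obtain ⟨e₀, -, rfl⟩ := Finset.mem_image.mp he
    obtain ⟨y, -, rfl⟩ := Finset.mem_image.mp hx
    simp [hfdef]
  have hGe : ∀ e ∈ G, e.card = s := by
    intro e he
    rcases Finset.mem_union.mp he with h | h
    · obtain ⟨e₀, he₀, rfl⟩ := Finset.mem_image.mp h
      rw [Finset.card_image_of_injective _ hf]; exact hHe e₀ he₀
    · exact (Finset.mem_powersetCard.mp (Finset.mem_filter.mp h).1).2
  have hA1 : ∀ e ∈ G, (e.filter (fun x : Fin n => (x : ℕ) < q)).card ≤ 1 := by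
    intro e he
    rcases Finset.mem_union.mp he with h | h
    · have : e.filter (fun x : Fin n => (x : ℕ) < q) = ∅ := by
        refine Finset.filter_eq_empty_iff.mpr fun x hx => ?_
        have := hH'B e h x hx; omega
      simp [this]
    · exact le_of_eq (Finset.mem_filter.mp h).2
  have hBH : ∀ e ∈ G, (∀ x ∈ e, q ≤ (x : ℕ)) → e ∈ H' := by
    intro e he hB
    rcases Finset.mem_union.mp he with h | h
    · exact h
    · exfalso
      have h1 := (Finset.mem_filter.mp h).2
      obtain ⟨x, hx⟩ := Finset.card_pos.mp (by omega : 0 < (e.filter (fun x : Fin n => (x : ℕ) < q)).card)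
      have := Finset.mem_filter.mp hx
      have := hB x this.1
      omega
  -- freeness of G
  have hGfree : ¬ ContainsCMP G s (s + 1) (fun i => a (i.val + 1)) := by
    rintro ⟨V, hdisj, hcard, hcomp⟩
    have hVne : ∀ i, (V i).Nonempty := fun i =>
      Finset.card_pos.mp (by rw [hcard]; exact ha1 _ (by omega) (by have := i.isLt; omega))
    choose v hv using hVne
    have claim2 : ∀ i j, i ≠ j → (∃ x ∈ V i, (x : ℕ) < q) → (∃ x ∈ V j, (x : ℕ) < q) →
        False := by
      rintro i j hij ⟨x, hxi, hxq⟩ ⟨y, hyj, hyq⟩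
      have hcompl : (({i, j} : Finset (Fin (s+1)))ᶜ).Nonempty := by
        rw [← Finset.card_pos, Finset.card_compl]
        have h2 : ({i, j} : Finset (Fin (s+1))).card ≤ 2 :=
          (Finset.card_insert_le _ _).trans (by simp)
        simp only [Fintype.card_fin]
        omega
      obtain ⟨k, hk⟩ := hcompl
      rw [Finset.mem_compl, Finset.mem_insert, Finset.mem_singleton] at hk
      push_neg at hk
      set S : Finset (Fin (s+1)) := Finset.univ.erase k with hSdef
      have hScard : S.card = s := by
        rw [hSdef, Finset.card_erase_of_mem (Finset.mem_univ _), Finset.card_univ,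
          Fintype.card_fin]
        omega
      set g : Fin (s+1) → Fin n := fun l => if l = i then x else if l = j then y else v l
        with hgdef
      have hgmem : ∀ l ∈ S, g l ∈ V l := by
        intro l _
        rw [hgdef]
        dsimp only
        split_ifs with h1 h2
        · subst h1; exact hxi
        · subst h2; exact hyj
        · exact hv l
      have hE : S.image g ∈ G := hcomp S hScard g hgmem
      have hxm : x ∈ S.image g := Finset.mem_image.mpr
        ⟨i, Finset.mem_erase.mpr ⟨Ne.symm hk.1, Finset.mem_univ _⟩, by simp [hgdef]⟩
      have hym : y ∈ S.image g := Finset.mem_image.mpr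
        ⟨j, Finset.mem_erase.mpr ⟨Ne.symm hk.2, Finset.mem_univ _⟩,
          by simp [hgdef, Ne.symm hij]⟩
      have hxy : x ≠ y := by
        intro h
        exact Finset.disjoint_left.mp (hdisj i j hij) hxi (h ▸ hyj)
      have hsubf : ({x, y} : Finset (Fin n)) ⊆
          (S.image g).filter (fun z : Fin n => (z : ℕ) < q) := by
        intro z hz
        rcases Finset.mem_insert.mp hz with rfl | hz
        · exact Finset.mem_filter.mpr ⟨hxm, hxq⟩
        · rw [Finset.mem_singleton] at hz; subst hz
          exact Finset.mem_filter.mpr ⟨hym, hyq⟩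
      have h2 : 2 ≤ ((S.image g).filter (fun z : Fin n => (z : ℕ) < q)).card := by
        calc 2 = ({x, y} : Finset (Fin n)).card := by
              rw [Finset.card_insert_of_notMem (by simpa using hxy), Finset.card_singleton]
          _ ≤ _ := Finset.card_le_card hsubf
      have := hA1 _ hE
      omega
    obtain ⟨i₀, hi₀⟩ : ∃ i₀ : Fin (s+1), ∀ j, j ≠ i₀ → ∀ x ∈ V j, q ≤ (x : ℕ) := by
      by_cases hex : ∃ i, ∃ x ∈ V i, (x : ℕ) < q
      · obtain ⟨i₀, hi₀⟩ := hex
        refine ⟨i₀, fun j hj x hx => ?_⟩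
        by_contra h
        exact claim2 j i₀ hj ⟨x, hx, by omega⟩ hi₀
      · refine ⟨0, fun j _ x hx => ?_⟩
        by_contra h
        exact hex ⟨j, x, hx, by omega⟩
    have hι : ∀ k : Fin s, i₀.succAbove k ≠ i₀ := fun k => Fin.succAbove_ne i₀ k
    have hιinj : Function.Injective i₀.succAbove := Fin.succAbove_right_injective
    have hVB : ∀ k : Fin s, ∀ x ∈ V (i₀.succAbove k), q ≤ (x : ℕ) := fun k => hi₀ _ (hι k)
    have hle : ∀ k : Fin s, a (k.val + 1) ≤ (V (i₀.succAbove k)).card := by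
      intro k
      rw [hcard]
      exact amono a (s+1) hmono (k.val + 1) ((i₀.succAbove k).val + 1) (by omega)
        (by have := succAbove_val_le i₀ k; omega)
        (by have := (i₀.succAbove k).isLt; omega)
    choose W hWsub hWcard using fun k => Finset.exists_subset_card_eq (hle k)
    have hWrange : ∀ k, ∀ x ∈ W k, q ≤ (x : ℕ) := fun k x hx => hVB k x (hWsub k hx)
    set W' : Fin s → Finset (Fin m) := fun k => (W k).preimage f hf.injOn with hW'def
    have hW'img : ∀ k, (W' k).image f = W k := by
      intro k
      rw [hW'def]
      dsimp only
      rw [Finset.image_preimage]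
      refine Finset.filter_true_of_mem fun x hx => ?_
      have h1 : q ≤ (x : ℕ) := hWrange k x hx
      exact ⟨⟨(x : ℕ) - q, by have := x.isLt; omega⟩, Fin.ext (by simp [hfdef]; omega)⟩
    have hW'card : ∀ k, (W' k).card = a (k.val + 1) := by
      intro k
      rw [← hWcard k, ← hW'img k, Finset.card_image_of_injective _ hf]
    refine hHfree ⟨W', ?_, hW'card, ?_⟩
    · intro k l hkl
      rw [Finset.disjoint_left]
      intro x hx1 hx2
      have h1 : f x ∈ V (i₀.succAbove k) := hWsub k (Finset.mem_preimage.mp hx1)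
      have h2 : f x ∈ V (i₀.succAbove l) := hWsub l (Finset.mem_preimage.mp hx2)
      exact Finset.disjoint_left.mp (hdisj _ _ fun h => hkl (hιinj h)) h1 h2
    · intro S hScard g₀ hg₀
      have hSu : S = Finset.univ :=
        Finset.eq_univ_of_card S (by rw [hScard, Fintype.card_fin])
      subst hSu
      set g' : Fin (s+1) → Fin n := fun jj =>
        if h : ∃ k : Fin s, i₀.succAbove k = jj then f (g₀ h.choose)
        else f (g₀ ⟨0, by omega⟩) with hg'def
      have hg'eq : ∀ k : Fin s, g' (i₀.succAbove k) = f (g₀ k) := by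
        intro k
        have hex : ∃ k' : Fin s, i₀.succAbove k' = i₀.succAbove k := ⟨k, rfl⟩
        simp only [hg'def]
        rw [dif_pos hex, show hex.choose = k from hιinj hex.choose_spec]
      set S' : Finset (Fin (s+1)) := Finset.univ.image i₀.succAbove with hS'def
      have hS'card : S'.card = s := by
        rw [hS'def, Finset.card_image_of_injective _ hιinj, Finset.card_univ,
          Fintype.card_fin]
      have hg'mem : ∀ jj ∈ S', g' jj ∈ V jj := by
        intro jj hjj
        obtain ⟨k, -, rfl⟩ := Finset.mem_image.mp hjj
        rw [hg'eq k]
        exact hWsub k (Finset.mem_preimage.mp (hg₀ k (Finset.mem_univ _)))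
      have hE : S'.image g' ∈ G := hcomp S' hS'card g' hg'mem
      have him : S'.image g' = (Finset.univ.image g₀).image f := by
        rw [hS'def, Finset.image_image, Finset.image_image]
        congr 1
        funext k
        exact hg'eq k
      rw [him] at hE
      have hEB : ∀ x ∈ (Finset.univ.image g₀).image f, q ≤ (x : ℕ) := by
        intro x hx
        obtain ⟨y, -, rfl⟩ := Finset.mem_image.mp hx
        simp [hfdef]
      have hE' := hBH _ hE hEB
      obtain ⟨e₀, he₀, heq⟩ := Finset.mem_image.mp hE'
      have he : e₀ = Finset.univ.image g₀ := Finset.image_injective hf heq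
      rw [← he]
      exact he₀
  -- the count
  have hcount : q * H.card ≤ cliqueCount G (s + 1) := by
    classical
    set A := (Finset.univ : Finset (Fin n)).filter (fun x : Fin n => (x : ℕ) < q) with hA
    have hAcard : A.card = q := by
      have : A.card = (Finset.univ : Finset (Fin q)).card := by
        refine Finset.card_bij (fun x hx => (⟨(x : ℕ), (Finset.mem_filter.mp hx).2⟩ : Fin q))
          (fun x hx => Finset.mem_univ _) ?_ ?_
        · intro x hx y hy hxy
          exact Fin.ext (by simpa using hxy)
        · intro b _
          exact ⟨⟨(b : ℕ), lt_of_lt_of_le b.isLt hqn⟩,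
            Finset.mem_filter.mpr ⟨Finset.mem_univ _, b.isLt⟩, rfl⟩
      simp [this]
    have hH'card : H'.card = H.card :=
      Finset.card_image_of_injective _ (Finset.image_injective hf)
    have key : (A ×ˢ H').card ≤ cliqueCount G (s + 1) := by
      unfold cliqueCount
      refine Finset.card_le_card_of_injOn (fun p => insert p.1 p.2) ?_ ?_
      · rintro ⟨x, e⟩ hp
        obtain ⟨hx, he⟩ := Finset.mem_product.mp hp
        have hxA : (x : ℕ) < q := (Finset.mem_filter.mp hx).2
        have hxe : x ∉ e := fun h => by have := hH'B e he x h; omega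
        have hecard : e.card = s := hGe e (Finset.mem_union_left _ he)
        refine Finset.mem_filter.mpr ⟨?_, ?_⟩
        · rw [Finset.mem_powersetCard]
          exact ⟨Finset.subset_univ _, by rw [Finset.card_insert_of_notMem hxe, hecard]⟩
        · intro fS hfS
          rw [Finset.mem_powersetCard] at hfS
          obtain ⟨hsub, hcardf⟩ := hfS
          by_cases hxf : x ∈ fS
          · refine Finset.mem_union_right _ (Finset.mem_filter.mpr ⟨?_, ?_⟩)
            · rw [Finset.mem_powersetCard]; exact ⟨Finset.subset_univ _, hcardf⟩
            · have hfilt : fS.filter (fun y : Fin n => (y : ℕ) < q) = {x} := by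
                ext y
                simp only [Finset.mem_filter, Finset.mem_singleton]
                constructor
                · rintro ⟨hy, hyq⟩
                  rcases Finset.mem_insert.mp (hsub hy) with h | h
                  · exact h
                  · exact absurd (hH'B e he y h) (by omega)
                · rintro rfl; exact ⟨hxf, hxA⟩
              rw [hfilt]; simp
          · have hsub' : fS ⊆ e := by
              intro y hy
              rcases Finset.mem_insert.mp (hsub hy) with h | h
              · exact absurd hy (h ▸ hxf)
              · exact h
            have : fS = e := Finset.eq_of_subset_of_card_le hsub'
              (le_of_eq (hecard.trans hcardf.symm))
            rw [this]; exact Finset.mem_union_left _ he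
      · rintro ⟨x, e⟩ hp ⟨x', e'⟩ hp' heq
        simp only [Finset.mem_coe] at hp hp'
        obtain ⟨hx, he⟩ := Finset.mem_product.mp hp
        obtain ⟨hx', he'⟩ := Finset.mem_product.mp hp'
        have hxA : (x : ℕ) < q := (Finset.mem_filter.mp hx).2
        have hxA' : (x' : ℕ) < q := (Finset.mem_filter.mp hx').2
        have hxe : x ∉ e := fun h => by have := hH'B e he x h; omega
        have hxe' : x' ∉ e' := fun h => by have := hH'B e' he' x' h; omega
        simp only at heq
        have hxx : x = x' := by
          have : x' ∈ insert x e := heq ▸ Finset.mem_insert_self x' e'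
          rcases Finset.mem_insert.mp this with h | h
          · exact h.symm
          · exact absurd (hH'B e he x' h) (by omega)
        have hee : e = e' := by
          have h1 : (insert x e).erase x = e := Finset.erase_insert hxe
          have h2 : (insert x' e').erase x' = e' := Finset.erase_insert hxe'
          rw [← h1, ← h2, heq, hxx]
        exact Prod.ext hxx hee
    calc q * H.card = (A ×ˢ H').card := by rw [Finset.card_product, hAcard, hH'card]
      _ ≤ cliqueCount G (s + 1) := key
  -- conclude
  refine le_trans hcount (le_csSup ?_ ?_)
  · refine ⟨((Finset.univ : Finset (Fin n)).powersetCard (s+1)).card, ?_⟩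
    rintro k ⟨G', -, -, rfl⟩
    exact Finset.card_le_card (Finset.filter_subset _ _)
  · exact ⟨G, hGe, hGfree, rfl⟩
end

section
/- Let r ≥ 3, let G be an (r−1)-uniform hypergraph, and let 𝓘 be a collection of cliques K_r^(r−1) of G such that no a-element subset of 𝓘 consists of cliques sharing a common edge (where a ≥ 2). Then every edge of G is contained in fewer than a cliques of 𝓘, and hence G contains at least |𝓘|/(r(a−1)) pairwise edge-disjoint cliques K_r^(r−1). -/
theorem stmt17 {α : Type*} [DecidableEq α] {r a : ℕ} (hr : 3 ≤ r) (ha : 2 ≤ a)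
    (G : Finset (Finset α)) (hG : ∀ e ∈ G, e.card = r - 1)
    (I : Finset (Finset α)) (hI : ∀ S ∈ I, SpansClique G r S)
    -- no `a`-element subset of `I` consists of cliques sharing a common edge
    (hA : ∀ T ⊆ I, T.card = a → ¬ ∃ e ∈ G, ∀ S ∈ T, e ⊆ S) :
    (∀ e ∈ G, (I.filter fun S => e ⊆ S).card < a) ∧
    ∃ I₁ ⊆ I, (I.card : ℚ) / (r * ((a : ℚ) - 1)) ≤ (I₁.card : ℚ) ∧
      ∀ S ∈ I₁, ∀ T ∈ I₁, S ≠ T →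
        ∀ f : Finset α, f.card = r - 1 → f ⊆ S → f ⊆ T → False := by
  have part1 : ∀ e ∈ G, (I.filter fun S => e ⊆ S).card < a := by
    intro e he
    by_contra h
    push_neg at h
    obtain ⟨T, hTsub, hTcard⟩ := Finset.exists_subset_card_eq h
    exact hA T (hTsub.trans (Finset.filter_subset _ _)) hTcard
      ⟨e, he, fun S hS => (Finset.mem_filter.mp (hTsub hS)).2⟩
  refine ⟨part1, ?_⟩
  -- collection of pairwise edge-disjoint subfamilies
  classical
  set 𝒥 : Finset (Finset (Finset α)) :=
    I.powerset.filter (fun J => ∀ S ∈ J, ∀ T ∈ J, S ≠ T →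
      ∀ f ∈ S.powersetCard (r - 1), ¬ f ⊆ T) with h𝒥
  have hne : (∅ : Finset (Finset α)) ∈ 𝒥 := by
    simp [h𝒥]
  obtain ⟨I₁, hI₁mem, hmax⟩ := Finset.exists_max_image 𝒥 Finset.card ⟨_, hne⟩
  simp only [h𝒥, Finset.mem_filter, Finset.mem_powerset] at hI₁mem
  obtain ⟨hI₁sub, hI₁disj⟩ := hI₁mem
  -- every clique in I shares an edge with some clique in I₁
  have hcover : ∀ S ∈ I, ∃ T ∈ I₁, ∃ f, f.card = r - 1 ∧ f ⊆ S ∧ f ⊆ T := by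
    intro S hS
    by_cases hSI₁ : S ∈ I₁
    · obtain ⟨f, hf, hfc⟩ := Finset.exists_subset_card_eq (s := S) (n := r - 1)
        (by rw [(hI S hS).1]; omega)
      exact ⟨S, hSI₁, f, hfc, hf, hf⟩
    · -- insert S I₁ is bigger, so it is not in 𝒥
      have hnot : insert S I₁ ∉ 𝒥 := by
        intro hmem
        have := hmax _ hmem
        rw [Finset.card_insert_of_notMem hSI₁] at this
        omega
      simp only [h𝒥, Finset.mem_filter, Finset.mem_powerset] at hnot
      push_neg at hnot
      obtain ⟨x, hx, y, hy, hxy, f, hf, hfy⟩ :=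
        hnot (Finset.insert_subset hS hI₁sub)
      rw [Finset.mem_powersetCard] at hf
      rw [Finset.mem_insert] at hx hy
      rcases hx with rfl | hx
      · rcases hy with rfl | hy
        · exact absurd rfl hxy
        · exact ⟨y, hy, f, hf.2, hf.1, hfy⟩
      · rcases hy with rfl | hy
        · exact ⟨x, hx, f, hf.2, hfy, hf.1⟩
        · exact absurd hfy (hI₁disj x hx y hy hxy f
            (Finset.mem_powersetCard.mpr hf))
  -- counting
  have hcount : I.card ≤ I₁.card * (r * (a - 1)) := by
    have hsub : I ⊆ I₁.biUnion (fun T =>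
        (T.powersetCard (r - 1)).biUnion (fun f => I.filter (fun S => f ⊆ S))) := by
      intro S hS
      obtain ⟨T, hT, f, hfc, hfS, hfT⟩ := hcover S hS
      exact Finset.mem_biUnion.mpr ⟨T, hT, Finset.mem_biUnion.mpr
        ⟨f, Finset.mem_powersetCard.mpr ⟨hfT, hfc⟩, Finset.mem_filter.mpr ⟨hS, hfS⟩⟩⟩
    calc I.card ≤ _ := Finset.card_le_card hsub
      _ ≤ ∑ T ∈ I₁, ((T.powersetCard (r - 1)).biUnion
            (fun f => I.filter (fun S => f ⊆ S))).card := Finset.card_biUnion_le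
      _ ≤ ∑ T ∈ I₁, r * (a - 1) := by
          apply Finset.sum_le_sum
          intro T hT
          have hTI : T ∈ I := hI₁sub hT
          calc _ ≤ ∑ f ∈ T.powersetCard (r - 1), (I.filter (fun S => f ⊆ S)).card :=
                Finset.card_biUnion_le
            _ ≤ ∑ _f ∈ T.powersetCard (r - 1), (a - 1) := by
                apply Finset.sum_le_sum
                intro f hf
                have := part1 f ((hI T hTI).2 f hf)
                omega
            _ = r * (a - 1) := by
                rw [Finset.sum_const, smul_eq_mul, Finset.card_powersetCard,
                  (hI T hTI).1, Nat.choose_symm (by omega : 1 ≤ r),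
                  Nat.choose_one_right]
      _ = I₁.card * (r * (a - 1)) := by rw [Finset.sum_const, smul_eq_mul]
  refine ⟨I₁, hI₁sub, ?_, ?_⟩
  · have hpos : (0 : ℚ) < r * ((a : ℚ) - 1) := by
      have h1 : (3 : ℚ) ≤ r := by exact_mod_cast hr
      have h2 : (2 : ℚ) ≤ a := by exact_mod_cast ha
      nlinarith
    rw [div_le_iff₀ hpos]
    have : ((a : ℚ) - 1) = ((a - 1 : ℕ) : ℚ) := by
      push_cast [Nat.cast_sub (by omega : 1 ≤ a)]; ring
    rw [this]
    exact_mod_cast hcount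
  · intro S hS T hT hST f hfc hfS hfT
    exact hI₁disj S hS T hT hST f (Finset.mem_powersetCard.mpr ⟨hfS, hfc⟩) hfT
end
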